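/- arXiv:2212.05522 — 3 statements merged into one kernel-verified Lean document; each statement's English description precedes it below -/
import Mathlib

section
/- Let 𝓕 be an ω-closed family of nonempty inductive subsets of ω and let S = B_ω^𝓕 ∪ {0} be B_ω^𝓕 with an adjoined zero. Then every Hausdorff locally compact semigroup topology on S (i.e., one making the multiplication jointly continuous) is discrete. -/
/-- For `n : ℕ` and `F ⊆ ω`, `wShift n F` is the set `(−n)+F = {x ∈ ω : x + n ∈ F}`. -/
def wShift (n : ℕ) (F : Set ℕ) : Set ℕ := {x | x + n ∈ F}

/-- A family `𝓕` of subsets of `ω` is ω-closed if `F₁ ∩ ((−n)+F₂) ∈ 𝓕`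
for all `n ∈ ω` and `F₁, F₂ ∈ 𝓕`. -/
def OmegaClosed (𝓕 : Set (Set ℕ)) : Prop :=
  ∀ n : ℕ, ∀ F₁ ∈ 𝓕, ∀ F₂ ∈ 𝓕, F₁ ∩ wShift n F₂ ∈ 𝓕

/-- A subset `F ⊆ ω` is inductive if `n ∈ F` implies `n+1 ∈ F`. -/
def InductiveSet (F : Set ℕ) : Prop := ∀ n : ℕ, n ∈ F → n + 1 ∈ F

/-- The underlying set `ω × ω × 𝓕` of the semigroup `B_ω^𝓕`. -/
abbrev BF (𝓕 : Set (Set ℕ)) : Type := ℕ × ℕ × {F : Set ℕ // F ∈ 𝓕}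

/-- The multiplication of the semigroup `B_ω^𝓕`:
`(i₁,j₁,F₁)·(i₂,j₂,F₂) = (i₁−j₁+i₂, j₂, ((j₁−i₂)+F₁) ∩ F₂)` if `j₁ ≤ i₂`, and
`(i₁, j₁−i₂+j₂, F₁ ∩ ((i₂−j₁)+F₂))` if `j₁ ≥ i₂`. -/
def BFmul {𝓕 : Set (Set ℕ)} (h : OmegaClosed 𝓕) (a b : BF 𝓕) : BF 𝓕 :=
  if a.2.1 ≤ b.1 then
    (a.1 + (b.1 - a.2.1), b.2.1,
      ⟨wShift (b.1 - a.2.1) a.2.2.1 ∩ b.2.2.1, by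
        rw [Set.inter_comm]; exact h _ _ b.2.2.2 _ a.2.2.2⟩)
  else
    (a.1, b.2.1 + (a.2.1 - b.1),
      ⟨a.2.2.1 ∩ wShift (a.2.1 - b.1) b.2.2.1, h _ _ a.2.2.2 _ b.2.2.2⟩)

/-- `B_ω^𝓕` with an adjoined zero; `none` plays the role of the zero `0`. -/
abbrev BF0 (𝓕 : Set (Set ℕ)) : Type := Option (BF 𝓕)

/-- The multiplication of the semigroup `B_ω^𝓕` with an adjoined zero. -/
def BF0mul {𝓕 : Set (Set ℕ)} (h : OmegaClosed 𝓕) : BF0 𝓕 → BF0 𝓕 → BF0 𝓕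
  | some a, some b => some (BFmul h a b)
  | _, _ => none

namespace Stmt13

open Set Filter Topology

lemma wShift_Ici (n k : ℕ) : wShift n (Set.Ici k) = Set.Ici (k - n) := by
  ext x; simp [wShift, Nat.sub_le_iff_le_add]

lemma wShift_zero (F : Set ℕ) : wShift 0 F = F := by
  ext x; simp [wShift]

lemma wShift_mono {F G : Set ℕ} (n : ℕ) (h : F ⊆ G) : wShift n F ⊆ wShift n G :=
  fun _ hx => h hx

lemma wShift_wShift (m n : ℕ) (F : Set ℕ) : wShift m (wShift n F) = wShift (n + m) F := by
  ext x; simp [wShift]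
  constructor <;> intro h
  · rw [Nat.add_comm n m, ← Nat.add_assoc]; exact h
  · rw [Nat.add_assoc, Nat.add_comm m n]; exact h

lemma sInf_Ici (n : ℕ) : sInf (Set.Ici n) = n :=
  le_antisymm (Nat.sInf_le (by simp)) (by
    have := Nat.sInf_mem (⟨n, by simp⟩ : (Set.Ici n).Nonempty)
    exact this)

variable {𝓕 : Set (Set ℕ)}

lemma mem_of_inductive (hind : ∀ F ∈ 𝓕, InductiveSet F) {F : Set ℕ} (hF : F ∈ 𝓕)
    {a b : ℕ} (ha : a ∈ F) (hab : a ≤ b) : b ∈ F := by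
  obtain ⟨d, rfl⟩ := Nat.exists_eq_add_of_le hab
  clear hab
  induction d with
  | zero => exact ha
  | succ d ih => exact hind F hF _ ih

lemma repr (hne : ∀ F ∈ 𝓕, F.Nonempty) (hind : ∀ F ∈ 𝓕, InductiveSet F)
    {F : Set ℕ} (hF : F ∈ 𝓕) : F = Set.Ici (sInf F) := by
  ext x
  constructor
  · intro hx; exact Nat.sInf_le hx
  · intro hx; exact mem_of_inductive hind hF (Nat.sInf_mem (hne F hF)) hx

-- continuing inside namespace Stmt13, variable 𝓕
section Part2
variable {𝓕 : Set (Set ℕ)} (hcl : OmegaClosed 𝓕)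

/-- the minimal left endpoint over the family -/
noncomputable def a0 (𝓕 : Set (Set ℕ)) : ℕ := sInf ((fun F => sInf F) '' 𝓕)

lemma a0_le (hF : ∀ F ∈ 𝓕, F.Nonempty) (hind : ∀ F ∈ 𝓕, InductiveSet F)
    {F : Set ℕ} (h : F ∈ 𝓕) : a0 𝓕 ≤ sInf F :=
  Nat.sInf_le ⟨F, h, rfl⟩

lemma Ici_a0_mem (hne : ∀ F ∈ 𝓕, F.Nonempty) (hind : ∀ F ∈ 𝓕, InductiveSet F)
    (h𝓕 : 𝓕.Nonempty) : Set.Ici (a0 𝓕) ∈ 𝓕 := by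
  have hA : ((fun F => sInf F) '' 𝓕).Nonempty := h𝓕.image _
  obtain ⟨F, hF, hFeq⟩ := Nat.sInf_mem hA
  simp only at hFeq
  have h2 := repr hne hind hF
  rw [hFeq] at h2
  rw [show a0 𝓕 = sInf ((fun F => sInf F) '' 𝓕) from rfl, ← h2]
  exact hF

lemma a0_le' (hne : ∀ F ∈ 𝓕, F.Nonempty) (hind : ∀ F ∈ 𝓕, InductiveSet F)
    {k : ℕ} (h : Set.Ici k ∈ 𝓕) : a0 𝓕 ≤ k := by
  have := a0_le hne hind h
  rwa [sInf_Ici] at this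

lemma mul_fst (a c : BF 𝓕) : (BFmul hcl a c).1 = a.1 + (c.1 - a.2.1) := by
  by_cases h : a.2.1 ≤ c.1 <;> simp [BFmul, h] <;> omega

lemma mul_snd (a c : BF 𝓕) : (BFmul hcl a c).2.1 = c.2.1 + (a.2.1 - c.1) := by
  by_cases h : a.2.1 ≤ c.1 <;> simp [BFmul, h] <;> omega

lemma mul_F_left (a c : BF 𝓕) : ∃ s ≤ a.2.1, (BFmul hcl a c).2.2.1 ⊆ wShift s c.2.2.1 := by
  by_cases h : a.2.1 ≤ c.1
  · exact ⟨0, Nat.zero_le _, by simp [BFmul, h, wShift_zero]⟩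
  · exact ⟨a.2.1 - c.1, Nat.sub_le _ _, by simp [BFmul, h]⟩

lemma mul_F_right (a c : BF 𝓕) : ∃ s ≤ c.1, (BFmul hcl a c).2.2.1 ⊆ wShift s a.2.2.1 := by
  by_cases h : a.2.1 ≤ c.1
  · refine ⟨c.1 - a.2.1, Nat.sub_le _ _, ?_⟩
    simp [BFmul, h]
  · exact ⟨0, Nat.zero_le _, by simp [BFmul, h, wShift_zero]⟩

/-- the sandwich: `u * x * v = b` for explicit `u`, `v`. -/
lemma sandwich (hne : ∀ F ∈ 𝓕, F.Nonempty) (hind : ∀ F ∈ 𝓕, InductiveSet F) (x b : BF 𝓕) :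
    BFmul hcl (BFmul hcl (b.1, x.1 + (sInf x.2.2.1 + 1), b.2.2) x)
      ((x.2.1 + (sInf x.2.2.1 + 1), b.2.1, b.2.2) : BF 𝓕) = b := by
  have hF : x.2.2.1 ∈ 𝓕 := x.2.2.2
  have h1 : BFmul hcl ((b.1, x.1 + (sInf x.2.2.1 + 1), b.2.2) : BF 𝓕) x
      = (b.1, x.2.1 + (sInf x.2.2.1 + 1), b.2.2) := by
    have hcond : ¬ (x.1 + (sInf x.2.2.1 + 1) ≤ x.1) := by omega
    simp only [BFmul, hcond, if_false]
    refine Prod.ext rfl (Prod.ext ?_ ?_)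
    · simp only
      omega
    · apply Subtype.ext
      simp only
      have : x.1 + (sInf x.2.2.1 + 1) - x.1 = sInf x.2.2.1 + 1 := by omega
      rw [this]
      apply Set.inter_eq_self_of_subset_left
      intro t ht
      exact mem_of_inductive hind hF (Nat.sInf_mem (hne _ hF)) (by omega)
  rw [h1]
  have hcond2 : (x.2.1 + (sInf x.2.2.1 + 1) : ℕ) ≤ x.2.1 + (sInf x.2.2.1 + 1) := le_rfl
  simp only [BFmul, hcond2, if_true]
  refine Prod.ext ?_ (Prod.ext rfl ?_)
  · simp
  · apply Subtype.ext
    simp [wShift_zero]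

/-- boxes are finite -/
lemma box_finite (hne : ∀ F ∈ 𝓕, F.Nonempty) (hind : ∀ F ∈ 𝓕, InductiveSet F) (P Q R : ℕ) :
    {y : BF 𝓕 | y.1 ≤ P ∧ y.2.1 ≤ Q ∧ sInf y.2.2.1 ≤ R}.Finite := by
  set f : BF 𝓕 → ℕ × ℕ × ℕ := fun y => (y.1, y.2.1, sInf y.2.2.1) with hf
  have hinj : Set.InjOn f {y : BF 𝓕 | y.1 ≤ P ∧ y.2.1 ≤ Q ∧ sInf y.2.2.1 ≤ R} := by
    intro y _ z _ hyz
    simp only [hf, Prod.mk.injEq] at hyz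
    obtain ⟨h1, h2, h3⟩ := hyz
    refine Prod.ext h1 (Prod.ext h2 (Subtype.ext ?_))
    rw [repr hne hind y.2.2.2, repr hne hind z.2.2.2, h3]
  have himg : (f '' {y : BF 𝓕 | y.1 ≤ P ∧ y.2.1 ≤ Q ∧ sInf y.2.2.1 ≤ R}).Finite := by
    apply Set.Finite.subset (Set.Finite.prod (Set.finite_Iic P)
      (Set.Finite.prod (Set.finite_Iic Q) (Set.finite_Iic R)))
    rintro _ ⟨y, ⟨hy1, hy2, hy3⟩, rfl⟩
    exact ⟨hy1, hy2, hy3⟩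
  exact Set.Finite.of_finite_image himg hinj

end Part2
section Part3
variable {𝓕 : Set (Set ℕ)} (hcl : OmegaClosed 𝓕)

/-- product on coordinate triples `(i, j, k)`, `k` the left endpoint of the `Ici`. -/
def prodT (u v : ℕ × ℕ × ℕ) : ℕ × ℕ × ℕ :=
  if u.2.1 ≤ v.1 then (u.1 + (v.1 - u.2.1), v.2.1, max (u.2.2 - (v.1 - u.2.1)) v.2.2)
  else (u.1, v.2.1 + (u.2.1 - v.1), max u.2.2 (v.2.2 - (u.2.1 - v.1)))

lemma mul_Ici_F {i j k i' j' k' : ℕ} (h : Set.Ici k ∈ 𝓕) (h' : Set.Ici k' ∈ 𝓕) :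
    (BFmul hcl (i, j, ⟨Set.Ici k, h⟩) (i', j', ⟨Set.Ici k', h'⟩)).2.2.1
      = Set.Ici ((prodT (i, j, k) (i', j', k')).2.2) := by
  by_cases hc : j ≤ i' <;>
    simp only [BFmul, prodT, hc, if_true, if_false, wShift_Ici, Set.Ici_inter_Ici] <;> rfl

lemma mul_Ici {i j k i' j' k' : ℕ} (h : Set.Ici k ∈ 𝓕) (h' : Set.Ici k' ∈ 𝓕)
    (hm : Set.Ici ((prodT (i, j, k) (i', j', k')).2.2) ∈ 𝓕) :
    BFmul hcl (i, j, ⟨Set.Ici k, h⟩) (i', j', ⟨Set.Ici k', h'⟩)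
      = ((prodT (i, j, k) (i', j', k')).1, (prodT (i, j, k) (i', j', k')).2.1,
         ⟨Set.Ici ((prodT (i, j, k) (i', j', k')).2.2), hm⟩) := by
  refine Prod.ext ?_ (Prod.ext ?_ (Subtype.ext ?_))
  · rw [mul_fst hcl]
    by_cases hc : j ≤ i' <;> simp [prodT, hc] <;> omega
  · rw [mul_snd hcl]
    by_cases hc : j ≤ i' <;> simp [prodT, hc] <;> omega
  · exact mul_Ici_F hcl h h'

lemma prodT_mem (hcl : OmegaClosed 𝓕) {i j k i' j' k' : ℕ} (h : Set.Ici k ∈ 𝓕) (h' : Set.Ici k' ∈ 𝓕) :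
    Set.Ici ((prodT (i, j, k) (i', j', k')).2.2) ∈ 𝓕 := by
  have := (BFmul hcl ((i, j, ⟨Set.Ici k, h⟩) : BF 𝓕) (i', j', ⟨Set.Ici k', h'⟩)).2.2.2
  rwa [mul_Ici_F hcl h h'] at this

/-- right multiplication by `q = (1,0,Ici a0)` on triples. -/
def stepT (a0 : ℕ) (t : ℕ × ℕ × ℕ) : ℕ × ℕ × ℕ :=
  if 1 ≤ t.2.1 then (t.1, t.2.1 - 1, t.2.2) else (t.1 + 1, 0, max (t.2.2 - 1) a0)

/-- left multiplication by `p = (0,1,Ici a0)` on triples. -/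
def stepU (a0 : ℕ) (t : ℕ × ℕ × ℕ) : ℕ × ℕ × ℕ :=
  if 1 ≤ t.1 then (t.1 - 1, t.2.1, t.2.2) else (0, t.2.1 + 1, max (t.2.2 - 1) a0)

lemma stepT_eq_prodT (a0 : ℕ) (t : ℕ × ℕ × ℕ) (hk : a0 ≤ t.2.2) :
    prodT t (1, 0, a0) = stepT a0 t := by
  obtain ⟨i, j, k⟩ := t
  simp only at hk
  have hmax : max k (a0 - (j - 1)) = k := Nat.max_eq_left (le_trans (Nat.sub_le _ _) hk)
  rcases Nat.lt_or_ge j 2 with hj | hj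
  · interval_cases j
    · simp [prodT, stepT]
    · have hmax2 : max (k - 0) a0 = k := by rw [Nat.sub_zero]; exact Nat.max_eq_left hk
      simp [prodT, stepT, hmax2, hk]
  · have h1 : ¬ (j ≤ 1) := by omega
    have h2 : 1 ≤ j := by omega
    simp [prodT, stepT, h1, h2, hmax]

lemma stepU_eq_prodT (a0 : ℕ) (t : ℕ × ℕ × ℕ) (hk : a0 ≤ t.2.2) :
    prodT (0, 1, a0) t = stepU a0 t := by
  obtain ⟨i, j, k⟩ := t
  simp only at hk
  rcases Nat.eq_zero_or_pos i with hi | hi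
  · subst hi
    simp [prodT, stepU, Nat.max_comm]
  · have h1 : (1:ℕ) ≤ i := hi
    have hmax : max (a0 - (i - 1)) k = k := Nat.max_eq_right (le_trans (Nat.sub_le _ _) hk)
    simp [prodT, stepU, h1, hmax]

lemma stepT_k (a0 : ℕ) (t : ℕ × ℕ × ℕ) (hk : a0 ≤ t.2.2) : a0 ≤ (stepT a0 t).2.2 := by
  obtain ⟨i, j, k⟩ := t; simp only at hk
  by_cases hj : 1 ≤ j <;> simp [stepT, hj] <;> omega

lemma stepT_sum (a0 : ℕ) (t : ℕ × ℕ × ℕ) :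
    t.1 + t.2.2 ≤ (stepT a0 t).1 + (stepT a0 t).2.2 := by
  obtain ⟨i, j, k⟩ := t
  by_cases hj : 1 ≤ j <;> simp [stepT, hj] <;> omega

lemma stepU_k (a0 : ℕ) (t : ℕ × ℕ × ℕ) (hk : a0 ≤ t.2.2) : a0 ≤ (stepU a0 t).2.2 := by
  obtain ⟨i, j, k⟩ := t; simp only at hk
  by_cases hi : 1 ≤ i <;> simp [stepU, hi] <;> omega

lemma stepU_sum (a0 : ℕ) (t : ℕ × ℕ × ℕ) :
    t.2.1 + t.2.2 ≤ (stepU a0 t).2.1 + (stepU a0 t).2.2 := by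
  obtain ⟨i, j, k⟩ := t
  by_cases hi : 1 ≤ i <;> simp [stepU, hi] <;> omega

lemma stepT_reach_j (a0 : ℕ) (i k : ℕ) : ∀ j, (stepT a0)^[j] (i, j, k) = (i, 0, k) := by
  intro j
  induction j with
  | zero => rfl
  | succ j ih =>
    rw [Function.iterate_succ_apply]
    have : stepT a0 (i, j + 1, k) = (i, j, k) := by simp [stepT]
    rw [this, ih]

lemma stepT_reach_k (a0 : ℕ) : ∀ d i, (stepT a0)^[d] (i, 0, a0 + d) = (i + d, 0, a0) := by
  intro d
  induction d with
  | zero => intro i; simp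
  | succ d ih =>
    intro i
    rw [Function.iterate_succ_apply]
    have hmax : max (a0 + (d + 1) - 1) a0 = a0 + d := by
      rw [show a0 + (d+1) - 1 = a0 + d from by omega]
      exact Nat.max_eq_left (Nat.le_add_right _ _)
    have h1 : stepT a0 (i, 0, a0 + (d + 1)) = (i + 1, 0, a0 + d) := by
      simp [stepT, hmax]
    rw [h1, ih, show i + 1 + d = i + (d + 1) from by omega]

lemma stepT_reach_row (a0 : ℕ) : ∀ s r, (stepT a0)^[s] (r, 0, a0) = (r + s, 0, a0) := by
  intro s
  induction s with
  | zero => intro r; simp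
  | succ s ih =>
    intro r
    rw [Function.iterate_succ_apply]
    have h1 : stepT a0 (r, 0, a0) = (r + 1, 0, a0) := by
      simp [stepT, Nat.max_eq_right (Nat.sub_le a0 1)]
    rw [h1, ih, show r + 1 + s = r + (s + 1) from by omega]

lemma stepT_reach (a0 : ℕ) (i j k : ℕ) (hk : a0 ≤ k) :
    ∀ r, i + (k - a0) ≤ r → ∃ n, (stepT a0)^[n] (i, j, k) = (r, 0, a0) := by
  intro r hr
  refine ⟨(r - (i + (k - a0))) + ((k - a0) + j), ?_⟩
  rw [Function.iterate_add_apply, Function.iterate_add_apply, stepT_reach_j]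
  have e1 : (stepT a0)^[k - a0] (i, 0, k) = (i + (k - a0), 0, a0) := by
    have h2 := stepT_reach_k a0 (k - a0) i
    rw [show a0 + (k - a0) = k from by omega] at h2
    exact h2
  rw [e1, stepT_reach_row,
    show i + (k - a0) + (r - (i + (k - a0))) = r from by omega]

end Part3
section Part4

lemma fin_bound {α : Type*} {G : Set α} (hG : G.Finite) (f : α → ℕ) :
    ∃ M, ∀ g ∈ G, f g ≤ M := by
  obtain ⟨M, hM⟩ := (hG.image f).bddAbove
  exact ⟨M, fun g hg => hM (Set.mem_image_of_mem f hg)⟩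

lemma boxfin3 (A B C : ℕ) : {t : ℕ × ℕ × ℕ | t.1 ≤ A ∧ t.2.1 ≤ B ∧ t.2.2 ≤ C}.Finite := by
  apply Set.Finite.subset ((Set.finite_Iic A).prod ((Set.finite_Iic B).prod (Set.finite_Iic C)))
  intro t ht
  exact ⟨ht.1, ht.2.1, ht.2.2⟩

def swapT (t : ℕ × ℕ × ℕ) : ℕ × ℕ × ℕ := (t.2.1, t.1, t.2.2)

lemma swapT_swapT (t : ℕ × ℕ × ℕ) : swapT (swapT t) = t := rfl

lemma stepU_swap (a0 : ℕ) (t : ℕ × ℕ × ℕ) : stepU a0 t = swapT (stepT a0 (swapT t)) := by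
  obtain ⟨i, j, k⟩ := t
  by_cases hi : 1 ≤ i <;> simp [stepU, stepT, swapT, hi]

lemma stepU_iterate (a0 : ℕ) (t : ℕ × ℕ × ℕ) :
    ∀ n, (stepU a0)^[n] t = swapT ((stepT a0)^[n] (swapT t)) := by
  intro n
  induction n generalizing t with
  | zero => obtain ⟨i, j, k⟩ := t; rfl
  | succ n ih =>
    rw [Function.iterate_succ_apply, Function.iterate_succ_apply, ih, stepU_swap, swapT_swapT]

lemma stepU_reach (a0 : ℕ) (i j k : ℕ) (hk : a0 ≤ k) :
    ∀ c, j + (k - a0) ≤ c → ∃ n, (stepU a0)^[n] (i, j, k) = (0, c, a0) := by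
  intro c hc
  obtain ⟨n, hn⟩ := stepT_reach a0 j i k hk c hc
  refine ⟨n, ?_⟩
  rw [stepU_iterate]
  have : swapT (i, j, k) = (j, i, k) := rfl
  rw [this, hn]
  rfl

lemma partB_core (a0 : ℕ) (mX : ℕ × ℕ × ℕ → Prop)
    (hka : ∀ t, mX t → a0 ≤ t.2.2)
    (hXinf : {t | mX t}.Infinite)
    (hql : ∃ G : Set (ℕ×ℕ×ℕ), G.Finite ∧ ∀ t, mX t → t ∉ G → mX (t.1 + 1, t.2.1, t.2.2))
    (hpr : ∃ G : Set (ℕ×ℕ×ℕ), G.Finite ∧ ∀ t, mX t → t ∉ G → mX (t.1, t.2.1 + 1, t.2.2))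
    (hqr : ∃ G : Set (ℕ×ℕ×ℕ), G.Finite ∧ ∀ t, mX t → t ∉ G → mX (stepT a0 t))
    (hpl : ∃ G : Set (ℕ×ℕ×ℕ), G.Finite ∧ ∀ t, mX t → t ∉ G → mX (stepU a0 t))
    (hprod : ∀ W : Set (ℕ×ℕ×ℕ), W.Finite → ∃ G : Set (ℕ×ℕ×ℕ), G.Finite ∧
      ∀ u v, mX u → mX v → u ∉ G → v ∉ G → mX (prodT u v) ∧ prodT u v ∉ W) :
    False := by
  -- i+k unbounded
  have ik_unb : ∀ M, ∃ t, mX t ∧ M < t.1 + t.2.2 := by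
    intro M
    by_contra hcon
    push_neg at hcon
    obtain ⟨G, hGfin, hG⟩ := hql
    obtain ⟨NJ, hNJ⟩ := fin_bound hGfin (fun t => t.2.1)
    have hex : ∃ t, mX t ∧ NJ < t.2.1 := by
      by_contra h2; push_neg at h2
      refine hXinf (Set.Finite.subset (boxfin3 M NJ M) ?_)
      intro t ht
      have h3 := hcon t ht
      exact ⟨by omega, h2 t ht, by omega⟩
    obtain ⟨t, htX, htj⟩ := hex
    have hs : ∀ s, mX (t.1 + s, t.2.1, t.2.2) := by
      intro s; induction s with
      | zero => exact htX
      | succ s ih =>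
        have hnot : ((t.1 + s, t.2.1, t.2.2) : ℕ×ℕ×ℕ) ∉ G := by
          intro hmem
          have := hNJ _ hmem
          simp only at this
          omega
        have h4 := hG _ ih hnot
        simp only at h4
        rw [show t.1 + s + 1 = t.1 + (s + 1) from by omega] at h4
        exact h4
    have h5 := hcon _ (hs (M + 1))
    simp only at h5
    omega
  -- j+k unbounded
  have jk_unb : ∀ M, ∃ t, mX t ∧ M < t.2.1 + t.2.2 := by
    intro M
    by_contra hcon
    push_neg at hcon
    obtain ⟨G, hGfin, hG⟩ := hpr
    obtain ⟨NI, hNI⟩ := fin_bound hGfin (fun t => t.1)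
    have hex : ∃ t, mX t ∧ NI < t.1 := by
      by_contra h2; push_neg at h2
      refine hXinf (Set.Finite.subset (boxfin3 NI M M) ?_)
      intro t ht
      have h3 := hcon t ht
      exact ⟨h2 t ht, by omega, by omega⟩
    obtain ⟨t, htX, hti⟩ := hex
    have hs : ∀ s, mX (t.1, t.2.1 + s, t.2.2) := by
      intro s; induction s with
      | zero => exact htX
      | succ s ih =>
        have hnot : ((t.1, t.2.1 + s, t.2.2) : ℕ×ℕ×ℕ) ∉ G := by
          intro hmem
          have := hNI _ hmem
          simp only at this
          omega
        have h4 := hG _ ih hnot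
        simp only at h4
        rw [show t.2.1 + s + 1 = t.2.1 + (s + 1) from by omega] at h4
        exact h4
    have h5 := hcon _ (hs (M + 1))
    simp only at h5
    omega
  -- cofinite row
  have hrow : ∃ R0, ∀ r, R0 ≤ r → mX (r, 0, a0) := by
    obtain ⟨G, hGfin, hG⟩ := hqr
    obtain ⟨MC, hMC⟩ := fin_bound hGfin (fun t => t.1 + t.2.2)
    obtain ⟨t, htX, hts⟩ := ik_unb MC
    have hiter : ∀ n, mX ((stepT a0)^[n] t) ∧
        MC < ((stepT a0)^[n] t).1 + ((stepT a0)^[n] t).2.2 ∧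
        a0 ≤ ((stepT a0)^[n] t).2.2 := by
      intro n; induction n with
      | zero => exact ⟨htX, hts, hka t htX⟩
      | succ n ih =>
        rw [Function.iterate_succ_apply']
        obtain ⟨h1, h2, h3⟩ := ih
        have hnot : (stepT a0)^[n] t ∉ G := by
          intro hmem; have := hMC _ hmem; omega
        exact ⟨hG _ h1 hnot, lt_of_lt_of_le h2 (stepT_sum a0 _), stepT_k a0 _ h3⟩
    refine ⟨t.1 + (t.2.2 - a0), fun r hr => ?_⟩
    obtain ⟨n, hn⟩ := stepT_reach a0 t.1 t.2.1 t.2.2 (hka t htX) r hr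
    have h6 := (hiter n).1
    have hn' : (stepT a0)^[n] t = (r, 0, a0) := hn
    rw [hn'] at h6
    exact h6
  -- cofinite column
  have hcol : ∃ C0, ∀ c, C0 ≤ c → mX (0, c, a0) := by
    obtain ⟨G, hGfin, hG⟩ := hpl
    obtain ⟨MC, hMC⟩ := fin_bound hGfin (fun t => t.2.1 + t.2.2)
    obtain ⟨t, htX, hts⟩ := jk_unb MC
    have hiter : ∀ n, mX ((stepU a0)^[n] t) ∧
        MC < ((stepU a0)^[n] t).2.1 + ((stepU a0)^[n] t).2.2 ∧
        a0 ≤ ((stepU a0)^[n] t).2.2 := by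
      intro n; induction n with
      | zero => exact ⟨htX, hts, hka t htX⟩
      | succ n ih =>
        rw [Function.iterate_succ_apply']
        obtain ⟨h1, h2, h3⟩ := ih
        have hnot : (stepU a0)^[n] t ∉ G := by
          intro hmem; have := hMC _ hmem; omega
        exact ⟨hG _ h1 hnot, lt_of_lt_of_le h2 (stepU_sum a0 _), stepU_k a0 _ h3⟩
    refine ⟨t.2.1 + (t.2.2 - a0), fun c hc => ?_⟩
    obtain ⟨n, hn⟩ := stepU_reach a0 t.1 t.2.1 t.2.2 (hka t htX) c hc
    have h6 := (hiter n).1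
    have hn' : (stepU a0)^[n] t = (0, c, a0) := hn
    rw [hn'] at h6
    exact h6
  -- the final contradiction
  obtain ⟨R0, hR0⟩ := hrow
  obtain ⟨C0, hC0⟩ := hcol
  obtain ⟨G, hGfin, hG⟩ := hprod {(a0, 0, a0)} (Set.finite_singleton _)
  have hbu : {s : ℕ | ((0 : ℕ), s, a0) ∈ G}.Finite := by
    have : {s : ℕ | ((0 : ℕ), s, a0) ∈ G} = (fun s : ℕ => ((0:ℕ), s, a0)) ⁻¹' G := rfl
    rw [this]
    apply Set.Finite.preimage _ hGfin
    intro x _ y _ hxy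
    simpa using hxy
  have hbv : {s : ℕ | ((s + a0 : ℕ), (0:ℕ), a0) ∈ G}.Finite := by
    have : {s : ℕ | ((s + a0 : ℕ), (0:ℕ), a0) ∈ G} = (fun s : ℕ => ((s + a0 : ℕ), (0:ℕ), a0)) ⁻¹' G := rfl
    rw [this]
    apply Set.Finite.preimage _ hGfin
    intro x _ y _ hxy
    simp only [Prod.mk.injEq] at hxy
    omega
  obtain ⟨B1, hB1⟩ := fin_bound (hbu.union hbv) id
  set s : ℕ := max (max R0 C0) (B1 + 1) with hs
  have hmu : mX (0, s, a0) := hC0 s (by omega)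
  have hmv : mX (s + a0, 0, a0) := hR0 (s + a0) (by omega)
  have hnu : ((0 : ℕ), s, a0) ∉ G := by
    intro hmem
    have := hB1 s (Set.mem_union_left _ hmem)
    simp only [id] at this
    omega
  have hnv : ((s + a0 : ℕ), (0:ℕ), a0) ∉ G := by
    intro hmem
    have := hB1 s (Set.mem_union_right _ hmem)
    simp only [id] at this
    omega
  have hfin := hG _ _ hmu hmv hnu hnv
  have hPT : prodT (0, s, a0) (s + a0, 0, a0) = (a0, 0, a0) := by
    have hc : s ≤ s + a0 := by omega
    simp only [prodT, hc, if_true, Prod.mk.injEq]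
    refine ⟨by omega, trivial, by omega⟩
  exact hfin.2 (by rw [hPT]; exact Set.mem_singleton _)

end Part4
section Part5
variable {𝓕 : Set (Set ℕ)}

/-- coordinates of an element -/
noncomputable def cT (a : BF 𝓕) : ℕ × ℕ × ℕ := (a.1, a.2.1, sInf a.2.2.1)

lemma E_coords (hne : ∀ F ∈ 𝓕, F.Nonempty) (hind : ∀ F ∈ 𝓕, InductiveSet F) (a : BF 𝓕) :
    ∃ h : Set.Ici (sInf a.2.2.1) ∈ 𝓕,
      ((a.1, a.2.1, ⟨Set.Ici (sInf a.2.2.1), h⟩) : BF 𝓕) = a := by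
  have hs : Set.Ici (sInf a.2.2.1) = a.2.2.1 := (repr hne hind a.2.2.2).symm
  refine ⟨by rw [hs]; exact a.2.2.2, Prod.ext rfl (Prod.ext rfl (Subtype.ext hs))⟩

lemma cT_inj (hne : ∀ F ∈ 𝓕, F.Nonempty) (hind : ∀ F ∈ 𝓕, InductiveSet F) :
    Function.Injective (cT (𝓕 := 𝓕)) := by
  intro a b hab
  simp only [cT, Prod.mk.injEq] at hab
  refine Prod.ext hab.1 (Prod.ext hab.2.1 (Subtype.ext ?_))
  rw [repr hne hind a.2.2.2, repr hne hind b.2.2.2, hab.2.2]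

lemma cT_E {t : ℕ × ℕ × ℕ} (h : Set.Ici t.2.2 ∈ 𝓕) :
    cT ((t.1, t.2.1, ⟨Set.Ici t.2.2, h⟩) : BF 𝓕) = t := by
  obtain ⟨i, j, k⟩ := t
  simp [cT, sInf_Ici]

lemma prodT_ql (a0 : ℕ) (t : ℕ × ℕ × ℕ) (ha : a0 ≤ t.2.2) :
    prodT (1, 0, a0) t = (t.1 + 1, t.2.1, t.2.2) := by
  obtain ⟨i, j, k⟩ := t
  simp only at ha
  have hc : (0:ℕ) ≤ i := Nat.zero_le _
  simp only [prodT, hc, if_true, Prod.mk.injEq]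
  refine ⟨by omega, trivial, by omega⟩

lemma prodT_pr (a0 : ℕ) (t : ℕ × ℕ × ℕ) (ha : a0 ≤ t.2.2) :
    prodT t (0, 1, a0) = (t.1, t.2.1 + 1, t.2.2) := by
  obtain ⟨i, j, k⟩ := t
  simp only at ha
  by_cases hc : j ≤ 0
  · simp only [prodT, hc, if_true, Prod.mk.injEq]
    refine ⟨by omega, by omega, by omega⟩
  · simp only [prodT, hc, if_false, Prod.mk.injEq]
    refine ⟨trivial, by omega, by omega⟩

/-- fiber bound for the sandwich maps -/
lemma fiber_bound (hcl : OmegaClosed 𝓕) (hne : ∀ F ∈ 𝓕, F.Nonempty)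
    (z y : BF 𝓕) (P Q : ℕ)
    (heq : BFmul hcl (BFmul hcl ((z.1, P, z.2.2) : BF 𝓕) y) ((Q, z.2.1, z.2.2) : BF 𝓕) = z) :
    y.1 ≤ P ∧ y.2.1 ≤ Q ∧ sInf y.2.2.1 ≤ sInf z.2.2.1 + (P + Q) := by
  set u : BF 𝓕 := (z.1, P, z.2.2) with hu
  set v : BF 𝓕 := (Q, z.2.1, z.2.2) with hv
  set A : BF 𝓕 := BFmul hcl u y with hA
  have e1 : (BFmul hcl A v).1 = A.1 + (v.1 - A.2.1) := mul_fst hcl A v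
  have e2 : A.1 = u.1 + (y.1 - u.2.1) := mul_fst hcl u y
  have e3 : (BFmul hcl A v).2.1 = v.2.1 + (A.2.1 - v.1) := mul_snd hcl A v
  have e4 : A.2.1 = y.2.1 + (u.2.1 - y.1) := mul_snd hcl u y
  have hz1 : (BFmul hcl A v).1 = z.1 := by rw [heq]
  have hz2 : (BFmul hcl A v).2.1 = z.2.1 := by rw [heq]
  have hu1 : u.1 = z.1 := rfl
  have hu2 : u.2.1 = P := rfl
  have hv1 : v.1 = Q := rfl
  have hv2 : v.2.1 = z.2.1 := rfl
  constructor
  · -- y.1 ≤ P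
    rw [e1, e2, hu1, hu2, hv1] at hz1
    omega
  constructor
  · -- y.2.1 ≤ Q
    rw [e3, e4, hv1, hv2, hu2] at hz2
    omega
  · obtain ⟨s1, hs1, hsub1⟩ := mul_F_left hcl u y
    obtain ⟨s2, hs2, hsub2⟩ := mul_F_right hcl A v
    have hzF : z.2.2.1 ⊆ wShift (s1 + s2) y.2.2.1 := by
      intro x hx
      have hx2 : x ∈ (BFmul hcl A v).2.2.1 := by rw [heq]; exact hx
      have hx3 : x ∈ wShift s2 A.2.2.1 := hsub2 hx2
      have hx4 : x + s2 ∈ A.2.2.1 := hx3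
      have hx5 : x + s2 ∈ wShift s1 y.2.2.1 := hsub1 hx4
      have hx6 : x + s2 + s1 ∈ y.2.2.1 := hx5
      show x + (s1 + s2) ∈ y.2.2.1
      rw [show x + (s1 + s2) = x + s2 + s1 from by omega]
      exact hx6
    have hmem : sInf z.2.2.1 + (s1 + s2) ∈ y.2.2.1 := hzF (Nat.sInf_mem (hne _ z.2.2.2))
    have := Nat.sInf_le hmem
    have hs1' : s1 ≤ P := by rw [← hu2]; exact hs1
    have hs2' : s2 ≤ Q := by rw [← hv1]; exact hs2
    omega

end Part5
section Part6
variable {𝓕 : Set (Set ℕ)}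

lemma mul_E (hcl : OmegaClosed 𝓕) {t t' : ℕ × ℕ × ℕ}
    (h : Set.Ici t.2.2 ∈ 𝓕) (h' : Set.Ici t'.2.2 ∈ 𝓕)
    {r : ℕ × ℕ × ℕ} (hr : prodT t t' = r) (hm : Set.Ici r.2.2 ∈ 𝓕) :
    BFmul hcl ((t.1, t.2.1, ⟨Set.Ici t.2.2, h⟩) : BF 𝓕)
        ((t'.1, t'.2.1, ⟨Set.Ici t'.2.2, h'⟩) : BF 𝓕)
      = ((r.1, r.2.1, ⟨Set.Ici r.2.2, hm⟩) : BF 𝓕) := by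
  subst hr
  exact mul_Ici hcl h h' hm

lemma prodT_mem' (hcl : OmegaClosed 𝓕) {t t' : ℕ × ℕ × ℕ}
    (h : Set.Ici t.2.2 ∈ 𝓕) (h' : Set.Ici t'.2.2 ∈ 𝓕) :
    Set.Ici ((prodT t t').2.2) ∈ 𝓕 :=
  prodT_mem hcl (i := t.1) (j := t.2.1) (k := t.2.2) (i' := t'.1) (j' := t'.2.1) (k' := t'.2.2) h h'

end Part6

theorem statement13' (𝓕 : Set (Set ℕ)) (hcl : OmegaClosed 𝓕)
    (hne : ∀ F ∈ 𝓕, F.Nonempty) (hind : ∀ F ∈ 𝓕, InductiveSet F)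
    (τ : TopologicalSpace (BF0 𝓕)) (hT2 : @T2Space _ τ)
    (hlc : @LocallyCompactSpace _ τ)
    (hjc : @Continuous (BF0 𝓕 × BF0 𝓕) (BF0 𝓕)
      (@instTopologicalSpaceProd _ _ τ τ) τ (fun p => BF0mul hcl p.1 p.2)) :
    τ = ⊥ := by
  classical
  letI : TopologicalSpace (BF0 𝓕) := τ
  haveI : T2Space (BF0 𝓕) := hT2
  haveI : LocallyCompactSpace (BF0 𝓕) := hlc
  have hjc' : Continuous (fun p : BF0 𝓕 × BF0 𝓕 => BF0mul hcl p.1 p.2) := hjc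
  apply eq_bot_of_singletons_open
  by_cases hB : Nonempty (BF 𝓕)
  swap
  · intro x
    have hx : ∀ y : BF0 𝓕, y = x := by
      intro y
      cases y with
      | none =>
        cases x with
        | none => rfl
        | some a => exact absurd ⟨a⟩ hB
      | some a => exact absurd ⟨a⟩ hB
    have hxu : ({x} : Set (BF0 𝓕)) = Set.univ := Set.eq_univ_of_forall (fun y => hx y)
    rw [hxu]; exact isOpen_univ
  · have h𝓕 : 𝓕.Nonempty := ⟨hB.some.2.2.1, hB.some.2.2.2⟩
    have h0F : Set.Ici (a0 𝓕) ∈ 𝓕 := Ici_a0_mem hne hind h𝓕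
    haveI hcnt : Countable (BF 𝓕) := Function.Injective.countable (cT_inj hne hind)
    have hmul_left : ∀ u : BF0 𝓕, Continuous (fun y : BF0 𝓕 => BF0mul hcl u y) :=
      fun u => hjc'.comp (continuous_const.prodMk continuous_id)
    have hmul_right : ∀ v : BF0 𝓕, Continuous (fun y : BF0 𝓕 => BF0mul hcl y v) :=
      fun v => hjc'.comp (continuous_id.prodMk continuous_const)
    -- Step 1: some isolated nonzero point, by Baire
    have hstep1 : ∃ z : BF 𝓕, IsOpen ({some z} : Set (BF0 𝓕)) := by
      by_contra hno
      push_neg at hno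
      have hd : Dense (⋂ b : BF 𝓕, ({some b}ᶜ : Set (BF0 𝓕))) :=
        dense_iInter_of_isOpen (fun b => isClosed_singleton.isOpen_compl)
          (fun b => dense_compl_singleton_iff_not_open.2 (hno b))
      have hEq : (⋂ b : BF 𝓕, ({some b}ᶜ : Set (BF0 𝓕))) = {none} := by
        ext y
        simp only [Set.mem_iInter, Set.mem_compl_iff, Set.mem_singleton_iff]
        cases y with
        | none => simp
        | some a =>
          constructor
          · intro h; exact absurd rfl (h a)
          · intro h; exact absurd h (by simp)
      rw [hEq] at hd
      have h2 := hd.closure_eq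
      rw [isClosed_singleton.closure_eq] at h2
      have h3 : (some hB.some : BF0 𝓕) ∈ ({none} : Set (BF0 𝓕)) := by
        rw [h2]; exact Set.mem_univ _
      simp at h3
    obtain ⟨z, hz⟩ := hstep1
    -- Step 2: every nonzero point is isolated
    have hallB : ∀ b : BF 𝓕, IsOpen ({some b} : Set (BF0 𝓕)) := by
      intro b
      set P : ℕ := b.1 + (sInf b.2.2.1 + 1) with hPdef
      set Q : ℕ := b.2.1 + (sInf b.2.2.1 + 1) with hQdef
      set u : BF 𝓕 := (z.1, P, z.2.2) with hudef
      set v : BF 𝓕 := (Q, z.2.1, z.2.2) with hvdef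
      set Ψ : BF0 𝓕 → BF0 𝓕 := fun y => BF0mul hcl (BF0mul hcl (some u) y) (some v) with hΨdef
      have hcont : Continuous Ψ := (hmul_right (some v)).comp (hmul_left (some u))
      have hopen : IsOpen (Ψ ⁻¹' {some z}) := hz.preimage hcont
      have hmemb : some b ∈ Ψ ⁻¹' {some z} := by
        have hs := sandwich hcl hne hind b z
        show BF0mul hcl (BF0mul hcl (some u) (some b)) (some v) = some z
        show some (BFmul hcl (BFmul hcl u b) v) = some z
        exact congrArg some hs
      have hsub : Ψ ⁻¹' {some z} ⊆ some ''
          {y : BF 𝓕 | y.1 ≤ P ∧ y.2.1 ≤ Q ∧ sInf y.2.2.1 ≤ sInf z.2.2.1 + (P + Q)} := by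
        intro y hy
        simp only [Set.mem_preimage, Set.mem_singleton_iff] at hy
        cases y with
        | none =>
          exfalso
          have hcomp : Ψ none = none := rfl
          rw [hcomp] at hy
          exact Option.some_ne_none z hy.symm
        | some w =>
          have heq : BFmul hcl (BFmul hcl u w) v = z := by
            have : some (BFmul hcl (BFmul hcl u w) v) = some z := hy
            exact Option.some_injective _ this
          exact ⟨w, fiber_bound hcl hne z w P Q heq, rfl⟩
      have hfin : (Ψ ⁻¹' {some z}).Finite :=
        Set.Finite.subset ((box_finite hne hind P Q (sInf z.2.2.1 + (P + Q))).image some) hsub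
      have hclosed : IsClosed ((Ψ ⁻¹' {some z}) \ {some b}) :=
        (hfin.subset Set.diff_subset).isClosed
      have hsing : ({some b} : Set (BF0 𝓕)) = (Ψ ⁻¹' {some z}) \ ((Ψ ⁻¹' {some z}) \ {some b}) := by
        ext w
        simp only [Set.mem_diff, Set.mem_singleton_iff]
        constructor
        · rintro rfl
          exact ⟨hmemb, fun hh => hh.2 rfl⟩
        · rintro ⟨hw, h2⟩
          by_contra h3
          exact h2 ⟨hw, h3⟩
      rw [hsing]
      exact hopen.sdiff hclosed
    -- Step 3: zero is isolated
    intro x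
    cases x with
    | some b => exact hallB b
    | none =>
      by_contra h0
      obtain ⟨K, hKnhds, -, hKcomp⟩ := local_compact_nhds (x := (none : BF0 𝓕))
        (Filter.univ_mem)
      have hnoneK : (none : BF0 𝓕) ∈ K := mem_of_mem_nhds hKnhds
      have hisoFin : ∀ C : Set (BF0 𝓕), IsCompact C → (none : BF0 𝓕) ∉ C → C.Finite := by
        intro C hC hnn
        have hcover : C ⊆ ⋃ b : BF 𝓕, ({some b} : Set (BF0 𝓕)) := by
          intro w hw
          cases w with
          | none => exact absurd hw hnn
          | some a => exact Set.mem_iUnion.2 ⟨a, rfl⟩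
        obtain ⟨t, ht⟩ := hC.elim_finite_subcover
          (fun b : BF 𝓕 => ({some b} : Set (BF0 𝓕))) (fun b => hallB b) hcover
        exact Set.Finite.subset (t.finite_toSet.biUnion
          (fun b _ => Set.finite_singleton (some b))) ht
      have htr : ∀ U ∈ 𝓝 (none : BF0 𝓕), (K \ U).Finite := by
        intro U hU
        have h1 : IsCompact (K \ interior U) := hKcomp.diff isOpen_interior
        have h2 : (none : BF0 𝓕) ∉ K \ interior U :=
          fun h => h.2 (mem_interior_iff_mem_nhds.2 hU)
        refine (hisoFin _ h1 h2).subset ?_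
        intro w hw
        exact ⟨hw.1, fun hi => hw.2 (interior_subset hi)⟩
      set X : Set (BF0 𝓕) := K \ {none} with hXdef
      have hXK : X ⊆ K := Set.diff_subset
      have hXnone : (none : BF0 𝓕) ∉ X := fun h => h.2 rfl
      have hXinf : X.Infinite := by
        by_contra hfin
        rw [Set.not_infinite] at hfin
        have hKU : ({none} : Set (BF0 𝓕)) ∈ 𝓝 (none : BF0 𝓕) := by
          have hmem := Filter.inter_mem hKnhds
            ((hfin.isClosed.isOpen_compl).mem_nhds hXnone)
          have hEq : K ∩ Xᶜ = ({none} : Set (BF0 𝓕)) := by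
            ext w
            constructor
            · rintro ⟨hwK, hwX⟩
              by_contra hwn
              exact hwX ⟨hwK, hwn⟩
            · intro hw
              rw [Set.mem_singleton_iff] at hw
              subst hw
              exact ⟨hnoneK, fun h => h.2 rfl⟩
          rwa [hEq] at hmem
        apply h0
        rw [isOpen_iff_mem_nhds]
        intro w hw
        rw [Set.mem_singleton_iff] at hw
        subst hw
        exact hKU
      -- absorption
      have habs : ∀ f : BF0 𝓕 → BF0 𝓕, Continuous f → f none = none →
          ∃ G : Set (BF0 𝓕), G.Finite ∧ ∀ x ∈ X, x ∉ G → f x ∈ K := by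
        intro f hf hf0
        have hpre : f ⁻¹' K ∈ 𝓝 (none : BF0 𝓕) :=
          hf.continuousAt.preimage_mem_nhds (by rw [hf0]; exact hKnhds)
        refine ⟨K \ (f ⁻¹' K), htr _ hpre, ?_⟩
        intro x hx hxG
        by_contra h2
        exact hxG ⟨hXK hx, h2⟩
      -- the coordinate predicate
      set mX : ℕ × ℕ × ℕ → Prop := fun t => ∃ h : Set.Ici t.2.2 ∈ 𝓕,
        (some ((t.1, t.2.1, ⟨Set.Ici t.2.2, h⟩) : BF 𝓕)) ∈ X with hmXdef
      have hmem_mX : ∀ a : BF 𝓕, some a ∈ X → mX (cT a) := by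
        intro a ha
        obtain ⟨h, hEa⟩ := E_coords hne hind a
        exact ⟨h, hEa.symm ▸ ha⟩
      -- a bound function on BF0
      set cO : BF0 𝓕 → ℕ × ℕ × ℕ := fun x => Option.elim x (0, 0, 0) cT with hcOdef
      -- generic absorption on triples
      have htabs : ∀ f : BF0 𝓕 → BF0 𝓕, Continuous f → f none = none →
          ∃ Gt : Set (ℕ × ℕ × ℕ), Gt.Finite ∧ ∀ (t : ℕ × ℕ × ℕ) (h : Set.Ici t.2.2 ∈ 𝓕),
            (some ((t.1, t.2.1, ⟨Set.Ici t.2.2, h⟩) : BF 𝓕)) ∈ X → t ∉ Gt →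
            f (some ((t.1, t.2.1, ⟨Set.Ici t.2.2, h⟩) : BF 𝓕)) ∈ K := by
        intro f hf hf0
        obtain ⟨G, hGfin, hG⟩ := habs f hf hf0
        refine ⟨cO '' G, hGfin.image _, ?_⟩
        intro t h hmem htG
        have hnotG : (some ((t.1, t.2.1, ⟨Set.Ici t.2.2, h⟩) : BF 𝓕)) ∉ G := by
          intro hmem2
          apply htG
          refine ⟨_, hmem2, ?_⟩
          show cT ((t.1, t.2.1, ⟨Set.Ici t.2.2, h⟩) : BF 𝓕) = t
          exact cT_E h
        exact hG _ hmem hnotG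
      -- instantiate the four absorptions
      have hka : ∀ t, mX t → a0 𝓕 ≤ t.2.2 := by
        rintro t ⟨h, -⟩
        exact a0_le' hne hind h
      have hXinf3 : {t | mX t}.Infinite := by
        by_contra h2
        rw [Set.not_infinite] at h2
        apply hXinf
        have hsub2 : X ⊆ some '' (cT ⁻¹' {t | mX t}) := by
          intro x hx
          cases x with
          | none => exact absurd hx hXnone
          | some a => exact ⟨a, hmem_mX a hx, rfl⟩
        exact Set.Finite.subset ((h2.preimage ((cT_inj hne hind).injOn)).image _) hsub2
      have hqlE : ∃ Gt : Set (ℕ × ℕ × ℕ), Gt.Finite ∧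
          ∀ t, mX t → t ∉ Gt → mX (t.1 + 1, t.2.1, t.2.2) := by
        obtain ⟨Gt, hGtfin, hGt⟩ := htabs
          (fun y => BF0mul hcl (some ((1, 0, ⟨Set.Ici (a0 𝓕), h0F⟩) : BF 𝓕)) y)
          (hmul_left _) rfl
        refine ⟨Gt, hGtfin, ?_⟩
        rintro t ⟨h, hmem⟩ htG
        have hres := hGt t h hmem htG
        have hk : a0 𝓕 ≤ t.2.2 := a0_le' hne hind h
        have heq : BF0mul hcl (some ((1, 0, ⟨Set.Ici (a0 𝓕), h0F⟩) : BF 𝓕))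
            (some ((t.1, t.2.1, ⟨Set.Ici t.2.2, h⟩) : BF 𝓕))
            = some ((t.1 + 1, t.2.1, ⟨Set.Ici t.2.2, h⟩) : BF 𝓕) := by
          have := mul_E (t := ((1:ℕ), (0:ℕ), a0 𝓕)) (t' := t) hcl h0F h
            (prodT_ql (a0 𝓕) t hk) h
          exact congrArg some this
        rw [heq] at hres
        exact ⟨h, ⟨hres, by simp⟩⟩
      have hprE : ∃ Gt : Set (ℕ × ℕ × ℕ), Gt.Finite ∧
          ∀ t, mX t → t ∉ Gt → mX (t.1, t.2.1 + 1, t.2.2) := by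
        obtain ⟨Gt, hGtfin, hGt⟩ := htabs
          (fun y => BF0mul hcl y (some ((0, 1, ⟨Set.Ici (a0 𝓕), h0F⟩) : BF 𝓕)))
          (hmul_right _) rfl
        refine ⟨Gt, hGtfin, ?_⟩
        rintro t ⟨h, hmem⟩ htG
        have hres := hGt t h hmem htG
        have hk : a0 𝓕 ≤ t.2.2 := a0_le' hne hind h
        have heq : BF0mul hcl (some ((t.1, t.2.1, ⟨Set.Ici t.2.2, h⟩) : BF 𝓕))
            (some ((0, 1, ⟨Set.Ici (a0 𝓕), h0F⟩) : BF 𝓕))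
            = some ((t.1, t.2.1 + 1, ⟨Set.Ici t.2.2, h⟩) : BF 𝓕) := by
          have := mul_E (t := t) (t' := ((0:ℕ), (1:ℕ), a0 𝓕)) hcl h h0F
            (prodT_pr (a0 𝓕) t hk) h
          exact congrArg some this
        rw [heq] at hres
        exact ⟨h, ⟨hres, by simp⟩⟩
      have hqrE : ∃ Gt : Set (ℕ × ℕ × ℕ), Gt.Finite ∧
          ∀ t, mX t → t ∉ Gt → mX (stepT (a0 𝓕) t) := by
        obtain ⟨Gt, hGtfin, hGt⟩ := htabs
          (fun y => BF0mul hcl y (some ((1, 0, ⟨Set.Ici (a0 𝓕), h0F⟩) : BF 𝓕)))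
          (hmul_right _) rfl
        refine ⟨Gt, hGtfin, ?_⟩
        rintro t ⟨h, hmem⟩ htG
        have hres := hGt t h hmem htG
        have hk : a0 𝓕 ≤ t.2.2 := a0_le' hne hind h
        have hm : Set.Ici ((stepT (a0 𝓕) t).2.2) ∈ 𝓕 := by
          have hp := prodT_mem' hcl (t := t) (t' := ((1:ℕ), (0:ℕ), a0 𝓕)) h h0F
          rwa [stepT_eq_prodT (a0 𝓕) t hk] at hp
        have heq : BF0mul hcl (some ((t.1, t.2.1, ⟨Set.Ici t.2.2, h⟩) : BF 𝓕))
            (some ((1, 0, ⟨Set.Ici (a0 𝓕), h0F⟩) : BF 𝓕))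
            = some (((stepT (a0 𝓕) t).1, (stepT (a0 𝓕) t).2.1,
                ⟨Set.Ici ((stepT (a0 𝓕) t).2.2), hm⟩) : BF 𝓕) := by
          have := mul_E (t := t) (t' := ((1:ℕ), (0:ℕ), a0 𝓕)) hcl h h0F
            (stepT_eq_prodT (a0 𝓕) t hk) hm
          exact congrArg some this
        rw [heq] at hres
        exact ⟨hm, ⟨hres, by simp⟩⟩
      have hplE : ∃ Gt : Set (ℕ × ℕ × ℕ), Gt.Finite ∧
          ∀ t, mX t → t ∉ Gt → mX (stepU (a0 𝓕) t) := by
        obtain ⟨Gt, hGtfin, hGt⟩ := htabs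
          (fun y => BF0mul hcl (some ((0, 1, ⟨Set.Ici (a0 𝓕), h0F⟩) : BF 𝓕)) y)
          (hmul_left _) rfl
        refine ⟨Gt, hGtfin, ?_⟩
        rintro t ⟨h, hmem⟩ htG
        have hres := hGt t h hmem htG
        have hk : a0 𝓕 ≤ t.2.2 := a0_le' hne hind h
        have hm : Set.Ici ((stepU (a0 𝓕) t).2.2) ∈ 𝓕 := by
          have hp := prodT_mem' hcl (t := ((0:ℕ), (1:ℕ), a0 𝓕)) (t' := t) h0F h
          rwa [stepU_eq_prodT (a0 𝓕) t hk] at hp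
        have heq : BF0mul hcl (some ((0, 1, ⟨Set.Ici (a0 𝓕), h0F⟩) : BF 𝓕))
            (some ((t.1, t.2.1, ⟨Set.Ici t.2.2, h⟩) : BF 𝓕))
            = some (((stepU (a0 𝓕) t).1, (stepU (a0 𝓕) t).2.1,
                ⟨Set.Ici ((stepU (a0 𝓕) t).2.2), hm⟩) : BF 𝓕) := by
          have := mul_E (t := ((0:ℕ), (1:ℕ), a0 𝓕)) (t' := t) hcl h0F h
            (stepU_eq_prodT (a0 𝓕) t hk) hm
          exact congrArg some this
        rw [heq] at hres
        exact ⟨hm, ⟨hres, by simp⟩⟩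
      -- the product closure
      have hprodE : ∀ Wt : Set (ℕ × ℕ × ℕ), Wt.Finite →
          ∃ Gt : Set (ℕ × ℕ × ℕ), Gt.Finite ∧
          ∀ u v, mX u → mX v → u ∉ Gt → v ∉ Gt →
            mX (prodT u v) ∧ prodT u v ∉ Wt := by
        intro Wt hWt
        set W' : Set (BF0 𝓕) := some '' (cT ⁻¹' Wt) with hW'def
        have hW'fin : W'.Finite :=
          (hWt.preimage ((cT_inj hne hind).injOn)).image _
        have hW'n : (none : BF0 𝓕) ∉ W' := by
          rintro ⟨a, -, hcontra⟩
          exact Option.some_ne_none a hcontra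
        have hV : K \ W' ∈ 𝓝 (none : BF0 𝓕) := by
          rw [Set.diff_eq]
          exact Filter.inter_mem hKnhds ((hW'fin.isClosed.isOpen_compl).mem_nhds hW'n)
        have hpre : (fun p : BF0 𝓕 × BF0 𝓕 => BF0mul hcl p.1 p.2) ⁻¹' (K \ W')
            ∈ 𝓝 ((none, none) : BF0 𝓕 × BF0 𝓕) :=
          hjc'.continuousAt.preimage_mem_nhds hV
        rw [mem_nhds_prod_iff] at hpre
        obtain ⟨U1, hU1, U2, hU2, hsub⟩ := hpre
        refine ⟨cO '' ((K \ U1) ∪ (K \ U2)), ((htr _ hU1).union (htr _ hU2)).image _, ?_⟩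
        rintro u v ⟨hu1, humem⟩ ⟨hv1, hvmem⟩ hunG hvnG
        have hxu : (some ((u.1, u.2.1, ⟨Set.Ici u.2.2, hu1⟩) : BF 𝓕)) ∈ U1 := by
          by_contra h2
          apply hunG
          refine ⟨_, Set.mem_union_left _ ⟨hXK humem, h2⟩, cT_E hu1⟩
        have hxv : (some ((v.1, v.2.1, ⟨Set.Ici v.2.2, hv1⟩) : BF 𝓕)) ∈ U2 := by
          by_contra h2
          apply hvnG
          refine ⟨_, Set.mem_union_right _ ⟨hXK hvmem, h2⟩, cT_E hv1⟩
        have hres0 := hsub (Set.mk_mem_prod hxu hxv)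
        rw [Set.mem_preimage] at hres0
        have hres : BF0mul hcl (some ((u.1, u.2.1, ⟨Set.Ici u.2.2, hu1⟩) : BF 𝓕))
            (some ((v.1, v.2.1, ⟨Set.Ici v.2.2, hv1⟩) : BF 𝓕)) ∈ K \ W' := hres0
        have hm : Set.Ici ((prodT u v).2.2) ∈ 𝓕 := prodT_mem' hcl hu1 hv1
        have heq : BF0mul hcl (some ((u.1, u.2.1, ⟨Set.Ici u.2.2, hu1⟩) : BF 𝓕))
            (some ((v.1, v.2.1, ⟨Set.Ici v.2.2, hv1⟩) : BF 𝓕))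
            = some (((prodT u v).1, (prodT u v).2.1,
                ⟨Set.Ici ((prodT u v).2.2), hm⟩) : BF 𝓕) :=
          congrArg some (mul_E hcl hu1 hv1 rfl hm)
        rw [heq] at hres
        constructor
        · exact ⟨hm, ⟨hres.1, by simp⟩⟩
        · intro hW
          apply hres.2
          refine ⟨_, ?_, rfl⟩
          show cT (((prodT u v).1, (prodT u v).2.1,
            ⟨Set.Ici ((prodT u v).2.2), hm⟩) : BF 𝓕) ∈ Wt
          rw [cT_E hm]
          exact hW
      exact (partB_core (a0 𝓕) mX hka hXinf3 hqlE hprE hqrE hplE hprodE).elim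

end Stmt13

/-- Theorem 3.10: every Hausdorff locally compact semigroup topology (with jointly
continuous multiplication) on `S = B_ω^𝓕 ∪ {0}` (for an ω-closed family `𝓕` of
nonempty inductive subsets of `ω`) is discrete. -/
theorem statement13 (𝓕 : Set (Set ℕ)) (hcl : OmegaClosed 𝓕)
    (hne : ∀ F ∈ 𝓕, F.Nonempty) (hind : ∀ F ∈ 𝓕, InductiveSet F)
    (τ : TopologicalSpace (BF0 𝓕)) (hT2 : @T2Space _ τ)
    (hlc : @LocallyCompactSpace _ τ)
    (hjc : @Continuous (BF0 𝓕 × BF0 𝓕) (BF0 𝓕)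
      (@instTopologicalSpaceProd _ _ τ τ) τ (fun p => BF0mul hcl p.1 p.2)) :
    τ = ⊥ :=
  Stmt13.statement13' 𝓕 hcl hne hind τ hT2 hlc hjc
end

section
/- Let 𝓕 be an ω-closed family of nonempty inductive subsets of ω. Let S be a Hausdorff locally compact semitopological semigroup and I ⊆ S a nonempty compact two-sided ideal of S such that the complement S \ I is a subsemigroup of S isomorphic to B_ω^𝓕 (i.e., there is a multiplication-preserving bijection from B_ω^𝓕 onto S \ I). Then either S is compact or I is an open subset of S. -/
namespace BFaux

variable {𝓕 : Set (Set ℕ)} (hcl : OmegaClosed 𝓕)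
  (hne : ∀ F ∈ 𝓕, F.Nonempty) (hind : ∀ F ∈ 𝓕, InductiveSet F)


include hne hind

lemma ici_eq {F : Set ℕ} (hF : F ∈ 𝓕) : F = Set.Ici (sInf F) := by
  apply Set.Subset.antisymm
  · intro x hx; exact Nat.sInf_le hx
  · intro x hx
    have h0 : sInf F ∈ F := Nat.sInf_mem (hne F hF)
    have hx' : sInf F ≤ x := hx
    clear hx
    induction x, hx' using Nat.le_induction with
    | base => exact h0
    | succ n hn ih => exact hind F hF n ih

omit hne hind in
lemma sInf_Ici (m : ℕ) : sInf (Set.Ici m) = m :=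
  le_antisymm (Nat.sInf_le (Set.mem_Ici.mpr le_rfl)) (Nat.sInf_mem Set.nonempty_Ici)

lemma Ici_sInf_mem (x : BF 𝓕) : Set.Ici (sInf x.2.2.1) ∈ 𝓕 := by
  rw [← ici_eq hne hind x.2.2.2]; exact x.2.2.2

/-- elements of `BF 𝓕` with explicit minimum. -/
def elt (𝓕 : Set (Set ℕ)) (i j m : ℕ) (hm : Set.Ici m ∈ 𝓕) : BF 𝓕 := (i, j, ⟨Set.Ici m, hm⟩)

omit hne hind in
lemma BF_ext {x y : BF 𝓕} (h1 : x.1 = y.1) (h2 : x.2.1 = y.2.1)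
    (h3 : x.2.2.1 = y.2.2.1) : x = y := by
  rcases x with ⟨i, j, F⟩; rcases y with ⟨i', j', F'⟩
  simp only at h1 h2 h3
  subst h1 h2
  simp [Subtype.ext_iff, h3]

lemma eltRepr (x : BF 𝓕) : x = elt 𝓕 x.1 x.2.1 (sInf x.2.2.1) (Ici_sInf_mem hne hind x) :=
  BF_ext rfl rfl (ici_eq hne hind x.2.2.2)

lemma injmu : Function.Injective (fun x : BF 𝓕 => (x.1, x.2.1, sInf x.2.2.1)) := by
  intro x y h
  simp only [Prod.mk.injEq] at h
  refine BF_ext h.1 h.2.1 ?_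
  rw [ici_eq hne hind x.2.2.2, ici_eq hne hind y.2.2.2, h.2.2]

lemma boxFin (C₁ C₂ C₃ : ℕ) :
    {x : BF 𝓕 | x.1 ≤ C₁ ∧ x.2.1 ≤ C₂ ∧ sInf x.2.2.1 ≤ C₃}.Finite := by
  have he : {x : BF 𝓕 | x.1 ≤ C₁ ∧ x.2.1 ≤ C₂ ∧ sInf x.2.2.1 ≤ C₃}
      = (fun x : BF 𝓕 => (x.1, x.2.1, sInf x.2.2.1)) ⁻¹'
        (Set.Iic C₁ ×ˢ Set.Iic C₂ ×ˢ Set.Iic C₃) := by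
    ext x; simp
  rw [he]
  exact Set.Finite.preimage ((injmu hne hind).injOn)
    (((Set.finite_Iic C₁).prod ((Set.finite_Iic C₂).prod (Set.finite_Iic C₃))))


section Star
variable (𝓕) in
/-- the minimal threshold -/
noncomputable def Mstar : ℕ := sInf {m | Set.Ici m ∈ 𝓕}

variable (h𝓕 : 𝓕.Nonempty)
include h𝓕

lemma Mstar_mem : Set.Ici (Mstar 𝓕) ∈ 𝓕 := by
  obtain ⟨F, hF⟩ := h𝓕
  have : sInf F ∈ {m | Set.Ici m ∈ 𝓕} := by
    simp only [Set.mem_setOf_eq]; rw [← ici_eq hne hind hF]; exact hF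
  exact Nat.sInf_mem ⟨_, this⟩

omit hne hind h𝓕 in
lemma Mstar_le {m : ℕ} (hm : Set.Ici m ∈ 𝓕) : Mstar 𝓕 ≤ m := Nat.sInf_le hm

/-- p = (1,0,m*) -/
noncomputable def pE : BF 𝓕 := elt 𝓕 1 0 (Mstar 𝓕) (Mstar_mem hne hind h𝓕)
/-- q = (0,1,m*) -/
noncomputable def qE : BF 𝓕 := elt 𝓕 0 1 (Mstar 𝓕) (Mstar_mem hne hind h𝓕)

variable {i j m : ℕ} (hm : Set.Ici m ∈ 𝓕)

lemma mul_pE_left : BFmul hcl (pE hne hind h𝓕) (elt 𝓕 i j m hm) = elt 𝓕 (i + 1) j m hm := by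
  have hs : Mstar 𝓕 ≤ m := Mstar_le hm
  unfold BFmul pE elt
  rw [if_pos (by simp : (0:ℕ) ≤ i)]
  refine BF_ext (by simp; try omega) rfl ?_
  show wShift (i - 0) (Set.Ici (Mstar 𝓕)) ∩ Set.Ici m = Set.Ici m
  ext k; simp [wShift]; try omega

lemma mul_qE_left (hi : 1 ≤ i) :
    BFmul hcl (qE hne hind h𝓕) (elt 𝓕 i j m hm) = elt 𝓕 (i - 1) j m hm := by
  have hs : Mstar 𝓕 ≤ m := Mstar_le hm
  unfold BFmul qE elt
  rw [if_pos (by simpa using hi)]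
  refine BF_ext (by simp) rfl ?_
  show wShift (i - 1) (Set.Ici (Mstar 𝓕)) ∩ Set.Ici m = Set.Ici m
  ext k; simp [wShift]; try omega

lemma mul_pE_right (hj : 1 ≤ j) :
    BFmul hcl (elt 𝓕 i j m hm) (pE hne hind h𝓕) = elt 𝓕 i (j - 1) m hm := by
  have hs : Mstar 𝓕 ≤ m := Mstar_le hm
  unfold BFmul pE elt
  rcases Nat.lt_or_ge j 2 with hj2 | hj2
  · have hj1 : j = 1 := by omega
    subst hj1
    rw [if_pos (by simp)]
    refine BF_ext (by simp) rfl ?_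
    show wShift (1 - 1) (Set.Ici m) ∩ Set.Ici (Mstar 𝓕) = Set.Ici m
    ext k; simp [wShift]; try omega
  · rw [if_neg (by simp; try omega)]
    refine BF_ext rfl (by simp; try omega) ?_
    show Set.Ici m ∩ wShift (j - 1) (Set.Ici (Mstar 𝓕)) = Set.Ici m
    ext k; simp [wShift]; try omega

lemma mul_qE_right :
    BFmul hcl (elt 𝓕 i j m hm) (qE hne hind h𝓕) = elt 𝓕 i (j + 1) m hm := by
  have hs : Mstar 𝓕 ≤ m := Mstar_le hm
  unfold BFmul qE elt
  rcases Nat.eq_zero_or_pos j with hj | hj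
  · subst hj
    rw [if_pos (by simp)]
    refine BF_ext (by simp) rfl ?_
    show wShift (0 - 0) (Set.Ici m) ∩ Set.Ici (Mstar 𝓕) = Set.Ici m
    ext k; simp [wShift]; try omega
  · rw [if_neg (by simp; try omega)]
    refine BF_ext rfl (by simp; try omega) ?_
    show Set.Ici m ∩ wShift (j - 0) (Set.Ici (Mstar 𝓕)) = Set.Ici m
    ext k; simp [wShift]; try omega

end Star

section Prods
variable {i j m J a b c : ℕ} (hm : Set.Ici m ∈ 𝓕) (hc : Set.Ici c ∈ 𝓕)

omit hne hind in
lemma mul_v_right : BFmul hcl (elt 𝓕 i J m hm) (elt 𝓕 (J + m) b c hc)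
    = elt 𝓕 (i + m) b c hc := by
  unfold BFmul elt
  rw [if_pos (by simp : J ≤ J + m)]
  refine BF_ext (by simp) rfl ?_
  show wShift (J + m - J) (Set.Ici m) ∩ Set.Ici c = Set.Ici c
  ext k; simp [wShift]; try omega

omit hne hind in
lemma trans_eq : BFmul hcl (BFmul hcl (elt 𝓕 a (i + m + 1) c hc) (elt 𝓕 i j m hm))
    (elt 𝓕 (j + m + 1) b c hc) = elt 𝓕 a b c hc := by
  have h1 : BFmul hcl (elt 𝓕 a (i + m + 1) c hc) (elt 𝓕 i j m hm)
      = elt 𝓕 a (j + m + 1) c hc := by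
    unfold BFmul elt
    rw [if_neg (by simp; try omega)]
    refine BF_ext rfl (by simp; try omega) ?_
    show Set.Ici c ∩ wShift (i + m + 1 - i) (Set.Ici m) = Set.Ici c
    ext k; simp [wShift]; try omega
  rw [h1]
  unfold BFmul elt
  rw [if_pos le_rfl]
  refine BF_ext (by simp) rfl ?_
  show wShift (j + m + 1 - (j + m + 1)) (Set.Ici c) ∩ Set.Ici c = Set.Ici c
  ext k; simp [wShift]

end Prods

section Fib

lemma Lfib (u w : BF 𝓕) : {x : BF 𝓕 | BFmul hcl u x = w}.Finite := by
  obtain ⟨w1, w2, W, hW⟩ := w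
  apply Set.Finite.subset (boxFin hne hind (u.2.1 + w1) (w2 + u.2.1) (sInf W + u.2.1))
  intro x hx
  simp only [Set.mem_setOf_eq] at hx ⊢
  show x.1 ≤ u.2.1 + w1 ∧ x.2.1 ≤ w2 + u.2.1 ∧ sInf x.2.2.1 ≤ sInf W + u.2.1
  by_cases h : u.2.1 ≤ x.1
  · rw [BFmul, if_pos h] at hx
    simp only [Prod.mk.injEq, Subtype.mk.injEq] at hx
    obtain ⟨h1, h2, h3⟩ := hx
    have hmem : sInf W ∈ x.2.2.1 := by
      have hm2 : sInf W ∈ wShift (x.1 - u.2.1) u.2.2.1 ∩ x.2.2.1 := by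
        rw [h3]; exact Nat.sInf_mem (hne _ hW)
      exact hm2.2
    have hle : sInf x.2.2.1 ≤ sInf W := Nat.sInf_le hmem
    refine ⟨by omega, by omega, by omega⟩
  · rw [BFmul, if_neg h] at hx
    simp only [Prod.mk.injEq, Subtype.mk.injEq] at hx
    obtain ⟨h1, h2, h3⟩ := hx
    have hmem : sInf W + (u.2.1 - x.1) ∈ x.2.2.1 := by
      have hm2 : sInf W ∈ u.2.2.1 ∩ wShift (u.2.1 - x.1) x.2.2.1 := by
        rw [h3]; exact Nat.sInf_mem (hne _ hW)
      exact hm2.2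
    have hle : sInf x.2.2.1 ≤ sInf W + (u.2.1 - x.1) := Nat.sInf_le hmem
    refine ⟨by omega, by omega, by omega⟩

lemma Rfib (v w : BF 𝓕) : {x : BF 𝓕 | BFmul hcl x v = w}.Finite := by
  obtain ⟨w1, w2, W, hW⟩ := w
  apply Set.Finite.subset (boxFin hne hind w1 (w2 + v.1) (sInf W + v.1))
  intro x hx
  simp only [Set.mem_setOf_eq] at hx ⊢
  show x.1 ≤ w1 ∧ x.2.1 ≤ w2 + v.1 ∧ sInf x.2.2.1 ≤ sInf W + v.1
  by_cases h : x.2.1 ≤ v.1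
  · rw [BFmul, if_pos h] at hx
    simp only [Prod.mk.injEq, Subtype.mk.injEq] at hx
    obtain ⟨h1, h2, h3⟩ := hx
    have hmem : sInf W + (v.1 - x.2.1) ∈ x.2.2.1 := by
      have hm2 : sInf W ∈ wShift (v.1 - x.2.1) x.2.2.1 ∩ v.2.2.1 := by
        rw [h3]; exact Nat.sInf_mem (hne _ hW)
      exact hm2.1
    have hle : sInf x.2.2.1 ≤ sInf W + (v.1 - x.2.1) := Nat.sInf_le hmem
    refine ⟨by omega, by omega, by omega⟩
  · rw [BFmul, if_neg h] at hx
    simp only [Prod.mk.injEq, Subtype.mk.injEq] at hx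
    obtain ⟨h1, h2, h3⟩ := hx
    have hmem : sInf W ∈ x.2.2.1 := by
      have hm2 : sInf W ∈ x.2.2.1 ∩ wShift (x.2.1 - v.1) v.2.2.1 := by
        rw [h3]; exact Nat.sInf_mem (hne _ hW)
      exact hm2.1
    have hle : sInf x.2.2.1 ≤ sInf W := Nat.sInf_le hmem
    refine ⟨by omega, by omega, by omega⟩

lemma tripleFib (u v t : BF 𝓕) :
    {x : BF 𝓕 | BFmul hcl (BFmul hcl u x) v = t}.Finite := by
  apply Set.Finite.subset ((Rfib hcl hne hind v t).biUnion
    (fun w _ => Lfib hcl hne hind u w))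
  intro x hx
  simp only [Set.mem_setOf_eq] at hx
  exact Set.mem_biUnion hx rfl

end Fib

section Comb
variable (h𝓕 : 𝓕.Nonempty)
include h𝓕

lemma comb (𝒜 : Set (BF 𝓕)) (hA : 𝒜.Infinite) (hD : 𝒜ᶜ.Infinite)
    (hR : ∀ v : BF 𝓕, {x : BF 𝓕 | x ∈ 𝒜 ∧ BFmul hcl x v ∉ 𝒜}.Finite)
    (hL : ∀ u : BF 𝓕, {x : BF 𝓕 | x ∈ 𝒜 ∧ BFmul hcl u x ∉ 𝒜}.Finite) : False := by
  classical
  set p := pE hne hind h𝓕 with hp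
  set q := qE hne hind h𝓕 with hq
  have hEfin : (({x : BF 𝓕 | x ∈ 𝒜 ∧ BFmul hcl x p ∉ 𝒜} ∪
      {x : BF 𝓕 | x ∈ 𝒜 ∧ BFmul hcl x q ∉ 𝒜}) ∪
      ({x : BF 𝓕 | x ∈ 𝒜 ∧ BFmul hcl p x ∉ 𝒜} ∪
      {x : BF 𝓕 | x ∈ 𝒜 ∧ BFmul hcl q x ∉ 𝒜})).Finite :=
    ((hR p).union (hR q)).union ((hL p).union (hL q))
  set E := (({x : BF 𝓕 | x ∈ 𝒜 ∧ BFmul hcl x p ∉ 𝒜} ∪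
      {x : BF 𝓕 | x ∈ 𝒜 ∧ BFmul hcl x q ∉ 𝒜}) ∪
      ({x : BF 𝓕 | x ∈ 𝒜 ∧ BFmul hcl p x ∉ 𝒜} ∪
      {x : BF 𝓕 | x ∈ 𝒜 ∧ BFmul hcl q x ∉ 𝒜})) with hE
  set N := hEfin.toFinset.sup (fun e => max e.1 (max e.2.1 (sInf e.2.2.1))) with hN
  have hNb : ∀ e ∈ E, e.1 ≤ N ∧ e.2.1 ≤ N ∧ sInf e.2.2.1 ≤ N := by
    intro e he
    have h1 : max e.1 (max e.2.1 (sInf e.2.2.1)) ≤ N :=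
      Finset.le_sup (f := fun e : BF 𝓕 => max e.1 (max e.2.1 (sInf e.2.2.1)))
        (hEfin.mem_toFinset.mpr he)
    exact ⟨by omega, by omega, by omega⟩
  have notE : ∀ x : BF 𝓕, (N < x.1 ∨ N < x.2.1 ∨ N < sInf x.2.2.1) → x ∉ E := by
    intro x hbig hxE
    have := hNb x hxE
    omega
  have bigelt : ∀ i j m : ℕ, ∀ hm : Set.Ici m ∈ 𝓕, (N < i ∨ N < j ∨ N < m) →
      (elt 𝓕 i j m hm ∉ E) := by
    intro i j m hm hbig
    apply notE
    simpa [elt, sInf_Ici] using hbig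
  -- A-side one-step lemmas
  have stepRq : ∀ i j m : ℕ, ∀ hm : Set.Ici m ∈ 𝓕, (N < i ∨ N < j ∨ N < m) →
      elt 𝓕 i j m hm ∈ 𝒜 → elt 𝓕 i (j+1) m hm ∈ 𝒜 := by
    intro i j m hm hbig hmem
    by_contra hcon
    refine bigelt i j m hm hbig (Or.inl (Or.inr ⟨hmem, ?_⟩))
    rw [mul_qE_right hcl hne hind h𝓕 hm]
    exact hcon
  have stepLp : ∀ i j m : ℕ, ∀ hm : Set.Ici m ∈ 𝓕, (N < i ∨ N < j ∨ N < m) →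
      elt 𝓕 i j m hm ∈ 𝒜 → elt 𝓕 (i+1) j m hm ∈ 𝒜 := by
    intro i j m hm hbig hmem
    by_contra hcon
    refine bigelt i j m hm hbig (Or.inr (Or.inl ⟨hmem, ?_⟩))
    rw [mul_pE_left hcl hne hind h𝓕 hm]
    exact hcon
  have quadA : ∀ i j m : ℕ, ∀ hm : Set.Ici m ∈ 𝓕, (N < i ∨ N < j ∨ N < m) →
      elt 𝓕 i j m hm ∈ 𝒜 → ∀ a b : ℕ, elt 𝓕 (i+a) (j+b) m hm ∈ 𝒜 := by
    intro i j m hm hbig hmem a b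
    have hcol : elt 𝓕 i (j+b) m hm ∈ 𝒜 := by
      induction b with
      | zero => exact hmem
      | succ b ih => exact stepRq i (j+b) m hm (by omega) ih
    have hbig2 : N < i ∨ N < j + b ∨ N < m := by omega
    induction a with
    | zero => exact hcol
    | succ a ih => exact stepLp (i+a) (j+b) m hm (by omega) ih
  -- D-side one-step lemmas
  have stepDi : ∀ a b c : ℕ, ∀ hc : Set.Ici c ∈ 𝓕, (N < a + 1 ∨ N < b ∨ N < c) →
      elt 𝓕 a b c hc ∈ 𝒜ᶜ → elt 𝓕 (a+1) b c hc ∈ 𝒜ᶜ := by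
    intro a b c hc hbig hmem
    intro hcon
    have h2 : BFmul hcl q (elt 𝓕 (a+1) b c hc) ∈ 𝒜 := by
      by_contra h3
      exact bigelt (a+1) b c hc hbig (Or.inr (Or.inr ⟨hcon, h3⟩))
    rw [mul_qE_left hcl hne hind h𝓕 hc (by omega)] at h2
    exact hmem h2
  have stepDj : ∀ a b c : ℕ, ∀ hc : Set.Ici c ∈ 𝓕, (N < a ∨ N < b + 1 ∨ N < c) →
      elt 𝓕 a b c hc ∈ 𝒜ᶜ → elt 𝓕 a (b+1) c hc ∈ 𝒜ᶜ := by
    intro a b c hc hbig hmem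
    intro hcon
    have h2 : BFmul hcl (elt 𝓕 a (b+1) c hc) p ∈ 𝒜 := by
      by_contra h3
      exact bigelt a (b+1) c hc hbig (Or.inl (Or.inl ⟨hcon, h3⟩))
    rw [mul_pE_right hcl hne hind h𝓕 hc (by omega)] at h2
    exact hmem h2
  have quadD : ∀ a b c : ℕ, ∀ hc : Set.Ici c ∈ 𝓕, (N < a ∨ N < b ∨ N < c) →
      elt 𝓕 a b c hc ∈ 𝒜ᶜ → ∀ k l : ℕ, elt 𝓕 (a+k) (b+l) c hc ∈ 𝒜ᶜ := by
    intro a b c hc hbig hmem k l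
    have hcol : elt 𝓕 a (b+l) c hc ∈ 𝒜ᶜ := by
      induction l with
      | zero => exact hmem
      | succ l ih => exact stepDj a (b+l) c hc (by omega) ih
    clear hmem
    induction k with
    | zero => exact hcol
    | succ k ih => exact stepDi (a+k) (b+l) c hc (by omega) ih
  -- big elements of A and D
  have hbox := boxFin hne hind (𝓕 := 𝓕) N N N
  obtain ⟨x, hxA, hxbox⟩ := (hA.diff hbox).nonempty
  obtain ⟨z, hzD, hzbox⟩ := (hD.diff hbox).nonempty
  have hxbig : N < x.1 ∨ N < x.2.1 ∨ N < sInf x.2.2.1 := by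
    have : ¬ (x.1 ≤ N ∧ x.2.1 ≤ N ∧ sInf x.2.2.1 ≤ N) := hxbox
    omega
  have hzbig : N < z.1 ∨ N < z.2.1 ∨ N < sInf z.2.2.1 := by
    have : ¬ (z.1 ≤ N ∧ z.2.1 ≤ N ∧ sInf z.2.2.1 ≤ N) := hzbox
    omega
  have hxA' : elt 𝓕 x.1 x.2.1 (sInf x.2.2.1) (Ici_sInf_mem hne hind x) ∈ 𝒜 := by
    rw [← eltRepr hne hind x]; exact hxA
  have hzD' : elt 𝓕 z.1 z.2.1 (sInf z.2.2.1) (Ici_sInf_mem hne hind z) ∈ 𝒜ᶜ := by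
    rw [← eltRepr hne hind z]; exact hzD
  set i₀ := x.1
  set j₀ := x.2.1
  set m₀ := sInf x.2.2.1
  set hm₀ := Ici_sInf_mem hne hind x
  set a₁ := z.1
  set b₁ := z.2.1
  set c₁ := sInf z.2.2.1
  set hc₁ := Ici_sInf_mem hne hind z
  have hQA : ∀ a b : ℕ, elt 𝓕 (i₀+a) (j₀+b) m₀ hm₀ ∈ 𝒜 := quadA i₀ j₀ m₀ hm₀ hxbig hxA'
  have hQD : ∀ k l : ℕ, elt 𝓕 (a₁+k) (b₁+l) c₁ hc₁ ∈ 𝒜ᶜ := quadD a₁ b₁ c₁ hc₁ hzbig hzD'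
  -- transfer to layer c₁
  have hginj : Function.Injective (fun a : ℕ => elt 𝓕 (i₀+a) j₀ m₀ hm₀) := by
    intro a a' h
    have h1 : i₀ + a = i₀ + a' := congrArg (fun w : BF 𝓕 => w.1) h
    omega
  have hinfrange := (Set.infinite_range_of_injective hginj).diff
    (hR (elt 𝓕 (j₀ + m₀) (N+1) c₁ hc₁))
  obtain ⟨y, hyr, hyn⟩ := hinfrange.nonempty
  obtain ⟨a, rfl⟩ := hyr
  simp only [Set.mem_setOf_eq, not_and, not_not] at hyn
  have hyv : BFmul hcl (elt 𝓕 (i₀+a) j₀ m₀ hm₀) (elt 𝓕 (j₀ + m₀) (N+1) c₁ hc₁) ∈ 𝒜 :=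
    hyn (hQA a 0)
  rw [mul_v_right hcl] at hyv
  have hQ2 : ∀ k l : ℕ, elt 𝓕 ((i₀+a+m₀)+k) ((N+1)+l) c₁ hc₁ ∈ 𝒜 :=
    quadA (i₀+a+m₀) (N+1) c₁ hc₁ (Or.inr (Or.inl (by omega))) hyv
  have h1 : elt 𝓕 (max (i₀+a+m₀) a₁) (max (N+1) b₁) c₁ hc₁ ∈ 𝒜 := by
    have h2 := hQ2 (max (i₀+a+m₀) a₁ - (i₀+a+m₀)) (max (N+1) b₁ - (N+1))
    rw [show (i₀+a+m₀) + (max (i₀+a+m₀) a₁ - (i₀+a+m₀)) = max (i₀+a+m₀) a₁ by omega,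
      show (N+1) + (max (N+1) b₁ - (N+1)) = max (N+1) b₁ by omega] at h2
    exact h2
  have h2 : elt 𝓕 (max (i₀+a+m₀) a₁) (max (N+1) b₁) c₁ hc₁ ∈ 𝒜ᶜ := by
    have h3 := hQD (max (i₀+a+m₀) a₁ - a₁) (max (N+1) b₁ - b₁)
    rw [show a₁ + (max (i₀+a+m₀) a₁ - a₁) = max (i₀+a+m₀) a₁ by omega,
      show b₁ + (max (N+1) b₁ - b₁) = max (N+1) b₁ by omega] at h3
    exact h3
  exact h2 h1

end Comb

end BFaux


lemma isoFinite {S : Type*} [TopologicalSpace S] {C : Set S}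
    (hC : IsCompact C) (hiso : ∀ x ∈ C, IsOpen ({x} : Set S)) : C.Finite := by
  obtain ⟨t, ht⟩ := hC.elim_finite_subcover (fun x : C => ({x.1} : Set S))
    (fun x => hiso x.1 x.2) (fun x hx => Set.mem_iUnion.mpr ⟨⟨x, hx⟩, rfl⟩)
  exact (t.finite_toSet.biUnion (fun i _ => Set.finite_singleton i.1)).subset ht


/-- Theorem 3.14: let `S` be a Hausdorff locally compact semitopological semigroup
containing a nonempty compact two-sided ideal `I` such that `S \ I` is a subsemigroup
isomorphic to `B_ω^𝓕`, for an ω-closed family `𝓕` of nonempty inductive subsets of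
`ω`. Then either `S` is compact or `I` is open. -/
theorem statement15 (𝓕 : Set (Set ℕ)) (hcl : OmegaClosed 𝓕)
    (hne𝓕 : ∀ F ∈ 𝓕, F.Nonempty) (hind : ∀ F ∈ 𝓕, InductiveSet F)
    {S : Type*} [Semigroup S] [TopologicalSpace S] [T2Space S] [LocallyCompactSpace S]
    (hsc : ∀ a : S, Continuous (fun x => a * x) ∧ Continuous (fun x => x * a))
    (I : Set S) (hIne : I.Nonempty) (hIcomp : IsCompact I)
    (hIideal : ∀ x y : S, (x ∈ I ∨ y ∈ I) → x * y ∈ I)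
    (φ : BF 𝓕 → S) (hφmul : ∀ x y : BF 𝓕, φ (BFmul hcl x y) = φ x * φ y)
    (hinj : Function.Injective φ) (hrange : Set.range φ = Iᶜ) :
    CompactSpace S ∨ IsOpen I := by
  classical
  by_cases hI : IsOpen I
  · exact Or.inr hI
  left
  have hIcl : IsClosed I := hIcomp.isClosed
  have hBop : IsOpen (Iᶜ : Set S) := hIcl.isOpen_compl
  by_cases hBe : (Iᶜ : Set S) = ∅
  · have hIuniv : I = Set.univ := Set.compl_empty_iff.mp hBe
    exact ⟨hIuniv ▸ hIcomp⟩
  have hBne : (Iᶜ : Set S).Nonempty := Set.nonempty_iff_ne_empty.mpr hBe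
  obtain ⟨b0, hb0⟩ := hBne
  have hb0r : b0 ∈ Set.range φ := by rw [hrange]; exact hb0
  obtain ⟨x0, hx0⟩ := hb0r
  have h𝓕ne : 𝓕.Nonempty := ⟨x0.2.2.1, x0.2.2.2⟩
  -- a witness of non-openness
  have hs : ∃ s ∈ I, ∀ W : Set S, IsOpen W → s ∈ W → ∃ w ∈ W, w ∈ Iᶜ := by
    by_contra hcon
    push_neg at hcon
    apply hI
    rw [isOpen_iff_mem_nhds]
    intro s hsI
    obtain ⟨W, hWo, hsW, hWsub⟩ := hcon s hsI
    refine mem_nhds_iff.mpr ⟨W, ?_, hWo, hsW⟩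
    intro w hw
    by_contra hwI
    exact (hWsub w hw) hwI
  -- countability
  have hsub𝓕 : 𝓕 ⊆ Set.range (Set.Ici : ℕ → Set ℕ) :=
    fun F hF => ⟨sInf F, (BFaux.ici_eq hne𝓕 hind hF).symm⟩
  have hc𝓕 : 𝓕.Countable := (Set.countable_range _).mono hsub𝓕
  haveI := hc𝓕.to_subtype
  have hBcnt : (Iᶜ : Set S).Countable := by
    rw [← hrange]; exact Set.countable_range φ
  haveI : LocallyCompactSpace ↥(Iᶜ : Set S) := hBop.locallyCompactSpace
  haveI : Nonempty ↥(Iᶜ : Set S) := ⟨⟨b0, hb0⟩⟩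
  haveI := hBcnt.to_subtype
  -- an isolated point of B via Baire
  obtain ⟨y, hy⟩ := nonempty_interior_of_iUnion_of_closed
    (f := fun b : ↥(Iᶜ : Set S) => ({b} : Set ↥(Iᶜ : Set S)))
    (fun b => isClosed_singleton) (Set.iUnion_of_singleton _)
  have hyop : IsOpen ({y} : Set ↥(Iᶜ : Set S)) := by
    obtain ⟨w, hw⟩ := hy
    have hwy : w = y := by have h2 := interior_subset hw; simpa using h2
    subst hwy
    have hint : interior ({w} : Set ↥(Iᶜ : Set S)) = {w} := by
      refine Set.Subset.antisymm interior_subset ?_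
      intro u hu
      rw [Set.mem_singleton_iff] at hu
      subst hu
      exact hw
    rw [← hint]
    exact isOpen_interior
  obtain ⟨U, hUo, hUeq⟩ := isOpen_induced_iff.mp hyop
  have hyS : IsOpen ({y.1} : Set S) := by
    have hset : U ∩ Iᶜ = {y.1} := by
      ext w
      constructor
      · rintro ⟨hwU, hwB⟩
        have h1 : (⟨w, hwB⟩ : ↥(Iᶜ : Set S)) ∈ Subtype.val ⁻¹' U := hwU
        rw [hUeq] at h1
        rw [Set.mem_singleton_iff]
        exact congrArg Subtype.val h1
      · intro hw
        rw [Set.mem_singleton_iff] at hw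
        subst hw
        refine ⟨?_, y.2⟩
        have h1 : y ∈ Subtype.val ⁻¹' U := by rw [hUeq]; rfl
        exact h1
    rw [← hset]
    exact hUo.inter hBop
  have hy1r : y.1 ∈ Set.range φ := by rw [hrange]; exact y.2
  obtain ⟨t0, ht0⟩ := hy1r
  -- every point of B is isolated
  have isoAll : ∀ x : BF 𝓕, IsOpen ({φ x} : Set S) := by
    intro x
    set u := BFaux.elt 𝓕 t0.1 (x.1 + sInf x.2.2.1 + 1) (sInf t0.2.2.1)
      (BFaux.Ici_sInf_mem hne𝓕 hind t0) with hu
    set v := BFaux.elt 𝓕 (x.2.1 + sInf x.2.2.1 + 1) t0.2.1 (sInf t0.2.2.1)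
      (BFaux.Ici_sInf_mem hne𝓕 hind t0) with hv
    have htrans : BFmul hcl (BFmul hcl u x) v = t0 := by
      conv_lhs => rw [BFaux.eltRepr hne𝓕 hind x]
      rw [hu, hv, BFaux.trans_eq hcl (BFaux.Ici_sInf_mem hne𝓕 hind x)
        (BFaux.Ici_sInf_mem hne𝓕 hind t0)]
      exact (BFaux.eltRepr hne𝓕 hind t0).symm
    have hcont : Continuous (fun w : S => (φ u * w) * φ v) :=
      ((hsc (φ v)).2).comp ((hsc (φ u)).1)
    set P := (fun w : S => (φ u * w) * φ v) ⁻¹' {φ t0} with hP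
    have hPo : IsOpen P := by
      apply hcont.isOpen_preimage
      rw [ht0]
      exact hyS
    have hxP : φ x ∈ P := by
      simp only [hP, Set.mem_preimage, Set.mem_singleton_iff]
      rw [← hφmul, ← hφmul, htrans]
    have hPsub : P ⊆ φ '' {w : BF 𝓕 | BFmul hcl (BFmul hcl u w) v = t0} := by
      intro w hw
      simp only [hP, Set.mem_preimage, Set.mem_singleton_iff] at hw
      have hwB : w ∈ (Iᶜ : Set S) := by
        by_contra hwI
        have h1 : (φ u * w) * φ v ∈ I :=
          hIideal _ _ (Or.inl (hIideal _ _ (Or.inr (not_not.mp hwI))))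
        rw [hw] at h1
        have h2 : φ t0 ∈ (Iᶜ : Set S) := by
          rw [← hrange]; exact Set.mem_range_self t0
        exact h2 h1
      have hwr : w ∈ Set.range φ := by rw [hrange]; exact hwB
      obtain ⟨w', hw'⟩ := hwr
      refine ⟨w', ?_, hw'⟩
      simp only [Set.mem_setOf_eq]
      apply hinj
      rw [hφmul, hφmul, hw', hw]
    have hPfin : P.Finite :=
      ((BFaux.tripleFib hcl hne𝓕 hind u v t0).image φ).subset hPsub
    have hxeq : ({φ x} : Set S) = P \ (P \ {φ x}) := by
      ext w
      simp only [Set.mem_diff, Set.mem_singleton_iff]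
      constructor
      · rintro rfl
        exact ⟨hxP, fun h => h.2 rfl⟩
      · rintro ⟨h1, h2⟩
        by_contra h3
        exact h2 ⟨h1, h3⟩
    rw [hxeq]
    exact hPo.sdiff ((hPfin.subset Set.diff_subset).isClosed)
  have isoB : ∀ w ∈ (Iᶜ : Set S), IsOpen ({w} : Set S) := by
    intro w hw
    have hwr : w ∈ Set.range φ := by rw [hrange]; exact hw
    obtain ⟨x, hx⟩ := hwr
    rw [← hx]
    exact isoAll x
  -- a compact open neighbourhood K of I
  obtain ⟨K', hK'c, hK'i⟩ := exists_compact_superset hIcomp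
  have hclUc : IsCompact (closure (interior K')) :=
    hK'c.of_isClosed_subset isClosed_closure (closure_minimal interior_subset hK'c.isClosed)
  have hF1c : IsCompact (closure (interior K') \ interior K') :=
    hclUc.inter_right isOpen_interior.isClosed_compl
  have hF1B : (closure (interior K') \ interior K') ⊆ (Iᶜ : Set S) :=
    fun w hw hwI => hw.2 (hK'i hwI)
  have hF1op : IsOpen (closure (interior K') \ interior K') := by
    rw [← Set.biUnion_of_singleton (closure (interior K') \ interior K')]
    exact isOpen_biUnion (fun w hw => isoB w (hF1B hw))
  set K := closure (interior K') with hK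
  have hKop : IsOpen K := by
    rw [hK, ← Set.union_diff_cancel (subset_closure : interior K' ⊆ closure (interior K'))]
    exact isOpen_interior.union hF1op
  have hKcomp : IsCompact K := hclUc
  have hIK : I ⊆ K := fun w hw => subset_closure (hK'i hw)
  set 𝒜 := φ ⁻¹' K with h𝒜
  -- finite exceptional sets for right translations
  have exceptR : ∀ v : BF 𝓕, {x : BF 𝓕 | x ∈ 𝒜 ∧ BFmul hcl x v ∉ 𝒜}.Finite := by
    intro v
    set O := (fun w : S => w * φ v) ⁻¹' K with hO
    have hOo : IsOpen O := hKop.preimage (hsc (φ v)).2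
    have hIO : I ⊆ O := fun w hw => hIK (hIideal _ _ (Or.inl hw))
    have hfin : (K \ O).Finite := by
      apply isoFinite (hKcomp.inter_right hOo.isClosed_compl)
      intro w hw
      apply isoB
      intro hwI
      exact hw.2 (hIO hwI)
    refine (hfin.preimage hinj.injOn).subset ?_
    rintro x ⟨hx1, hx2⟩
    refine ⟨hx1, ?_⟩
    intro hOmem
    apply hx2
    show φ (BFmul hcl x v) ∈ K
    rw [hφmul]
    exact hOmem
  have exceptL : ∀ u : BF 𝓕, {x : BF 𝓕 | x ∈ 𝒜 ∧ BFmul hcl u x ∉ 𝒜}.Finite := by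
    intro u
    set O := (fun w : S => φ u * w) ⁻¹' K with hO
    have hOo : IsOpen O := hKop.preimage (hsc (φ u)).1
    have hIO : I ⊆ O := fun w hw => hIK (hIideal _ _ (Or.inr hw))
    have hfin : (K \ O).Finite := by
      apply isoFinite (hKcomp.inter_right hOo.isClosed_compl)
      intro w hw
      apply isoB
      intro hwI
      exact hw.2 (hIO hwI)
    refine (hfin.preimage hinj.injOn).subset ?_
    rintro x ⟨hx1, hx2⟩
    refine ⟨hx1, ?_⟩
    intro hOmem
    apply hx2
    show φ (BFmul hcl u x) ∈ K
    rw [hφmul]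
    exact hOmem
  obtain ⟨s, hsI, hsW⟩ := hs
  have hAinf : 𝒜.Infinite := by
    intro hAfin
    have hKB : K ∩ Iᶜ = φ '' 𝒜 := by
      rw [h𝒜, Set.image_preimage_eq_inter_range, hrange]
    have hWo : IsOpen (K \ φ '' 𝒜) := hKop.sdiff (hAfin.image φ).isClosed
    have hsin : s ∈ K \ φ '' 𝒜 := by
      refine ⟨hIK hsI, ?_⟩
      intro hc
      have : s ∈ (Iᶜ : Set S) := by rw [← hKB] at hc; exact hc.2
      exact this hsI
    obtain ⟨w, hwW, hwB⟩ := hsW _ hWo hsin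
    exact hwW.2 (by rw [← hKB]; exact ⟨hwW.1, hwB⟩)
  by_cases hDfin : ((𝒜ᶜ : Set (BF 𝓕))).Finite
  · have huniv : (Set.univ : Set S) = K ∪ φ '' 𝒜ᶜ := by
      apply Set.eq_of_subset_of_subset
      · intro w _
        by_cases hwK : w ∈ K
        · exact Or.inl hwK
        · have hwB : w ∈ (Iᶜ : Set S) := fun hwI => hwK (hIK hwI)
          have hwr : w ∈ Set.range φ := by rw [hrange]; exact hwB
          obtain ⟨x, hx⟩ := hwr
          refine Or.inr ⟨x, ?_, hx⟩
          intro hxA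
          apply hwK
          rw [← hx]
          exact hxA
      · exact fun w _ => Set.mem_univ w
    exact ⟨by rw [huniv]; exact hKcomp.union (hDfin.image φ).isCompact⟩
  · exact (BFaux.comb hcl hne𝓕 hind h𝓕ne 𝒜 hAinf hDfin exceptR exceptL).elim
end

section
/- Let 𝓕 be an ω-closed family of nonempty inductive subsets of ω. Let S be a Hausdorff locally compact topological semigroup (multiplication jointly continuous) and I ⊆ S a nonempty compact two-sided ideal of S such that the complement S \ I is a subsemigroup of S isomorphic to B_ω^𝓕 (i.e., there is a multiplication-preserving bijection from B_ω^𝓕 onto S \ I). Then I is an open subset of S. -/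
set_option linter.unusedSectionVars false
set_option linter.unusedVariables false
set_option maxHeartbeats 1000000

namespace Aux

variable {𝓕 : Set (Set ℕ)}

lemma mem_wShift {n x : ℕ} {F : Set ℕ} : x ∈ wShift n F ↔ x + n ∈ F := Iff.rfl

lemma wShift_zero (F : Set ℕ) : wShift 0 F = F := by ext x; simp [wShift]

section Fam
variable (hne𝓕 : ∀ F ∈ 𝓕, F.Nonempty) (hind : ∀ F ∈ 𝓕, InductiveSet F)
include hne𝓕 hind

lemma add_mem {F : Set ℕ} (hF : F ∈ 𝓕) {x : ℕ} (hx : x ∈ F) (k : ℕ) : x + k ∈ F := by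
  induction k with
  | zero => simpa using hx
  | succ n ih => exact hind F hF _ ih

lemma mem_of_sInf_le {F : Set ℕ} (hF : F ∈ 𝓕) {x : ℕ} (hx : sInf F ≤ x) : x ∈ F := by
  have h0 : sInf F ∈ F := Nat.sInf_mem (hne𝓕 F hF)
  have h1 : sInf F + (x - sInf F) = x := by omega
  rw [← h1]
  exact add_mem hne𝓕 hind hF h0 _

lemma subset_of_sInf_le {F G : Set ℕ} (hF : F ∈ 𝓕) (hG : G ∈ 𝓕)
    (h : sInf G ≤ sInf F) : F ⊆ G := fun x hx =>
  mem_of_sInf_le hne𝓕 hind hG (le_trans h (Nat.sInf_le hx))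

lemma eq_of_sInf_eq {F G : Set ℕ} (hF : F ∈ 𝓕) (hG : G ∈ 𝓕)
    (h : sInf F = sInf G) : F = G :=
  Set.Subset.antisymm (subset_of_sInf_le hne𝓕 hind hF hG h.ge)
    (subset_of_sInf_le hne𝓕 hind hG hF h.le)

lemma exists_sInf_gt (h𝓕 : 𝓕.Infinite) (N : ℕ) : ∃ F ∈ 𝓕, N < sInf F := by
  by_contra hc
  push_neg at hc
  apply h𝓕
  apply Set.Finite.of_finite_image (f := sInf)
  · exact (Set.finite_Iic N).subset (by rintro n ⟨F, hF, rfl⟩; exact hc F hF)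
  · intro F hF G hG h
    exact eq_of_sInf_eq hne𝓕 hind hF hG h

/-- For inductive `F`, `wShift k F ∩ F = F`. -/
lemma wShift_inter_self {F : Set ℕ} (hF : F ∈ 𝓕) (k : ℕ) : wShift k F ∩ F = F := by
  apply Set.Subset.antisymm Set.inter_subset_right
  intro x hx
  exact ⟨add_mem hne𝓕 hind hF hx k, hx⟩

end Fam

lemma BF.ext {x y : BF 𝓕} (h1 : x.1 = y.1) (h2 : x.2.1 = y.2.1)
    (h3 : (x.2.2 : Set ℕ) = (y.2.2 : Set ℕ)) : x = y := by
  obtain ⟨a, b, c⟩ := x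
  obtain ⟨a', b', c'⟩ := y
  simp only at h1 h2 h3
  subst h1; subst h2
  congr 2
  exact Subtype.ext h3

section Mul
variable (hcl : OmegaClosed 𝓕)

lemma BFmul_of_le {x y : BF 𝓕} (h : x.2.1 ≤ y.1) :
    BFmul hcl x y = (x.1 + (y.1 - x.2.1), y.2.1,
      ⟨wShift (y.1 - x.2.1) x.2.2.1 ∩ y.2.2.1, by
        rw [Set.inter_comm]; exact hcl _ _ y.2.2.2 _ x.2.2.2⟩) := by
  simp [BFmul, h]

lemma BFmul_of_gt {x y : BF 𝓕} (h : y.1 < x.2.1) :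
    BFmul hcl x y = (x.1, y.2.1 + (x.2.1 - y.1),
      ⟨x.2.2.1 ∩ wShift (x.2.1 - y.1) y.2.2.1, hcl _ _ x.2.2.2 _ y.2.2.2⟩) := by
  simp [BFmul, Nat.not_le.mpr h]

variable (hne𝓕 : ∀ F ∈ 𝓕, F.Nonempty) (hind : ∀ F ∈ 𝓕, InductiveSet F)
variable (Gs : {F : Set ℕ // F ∈ 𝓕}) (hGs : ∀ F ∈ 𝓕, sInf Gs.1 ≤ sInf F)
include hne𝓕 hind hGs

/-- Any `F ∈ 𝓕` is contained in any shift of the minimal set. -/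
lemma subset_wShift_Gs {F : Set ℕ} (hF : F ∈ 𝓕) (k : ℕ) : F ⊆ wShift k Gs.1 := by
  intro x hx
  exact mem_of_sInf_le hne𝓕 hind Gs.2 (le_trans (hGs F hF) (le_trans (Nat.sInf_le hx) (by omega)))

lemma subset_Gs {F : Set ℕ} (hF : F ∈ 𝓕) : F ⊆ Gs.1 :=
  subset_of_sInf_le hne𝓕 hind hF Gs.2 (hGs F hF)

/-- multiplication by `(0,1,G*)` on the right increments `j`. -/
lemma mul_jinc (x : BF 𝓕) :
    BFmul hcl x (0, 1, Gs) = (x.1, x.2.1 + 1, x.2.2) := by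
  rcases Nat.eq_zero_or_pos x.2.1 with h | h
  · rw [BFmul_of_le hcl (by simpa [h] : x.2.1 ≤ (0, 1, Gs).1)]
    apply BF.ext <;> simp [h, wShift_zero]
    exact subset_Gs hne𝓕 hind Gs hGs x.2.2.2
  · rw [BFmul_of_gt hcl (by simpa : ((0:ℕ), 1, Gs).1 < x.2.1)]
    apply BF.ext <;> simp
    · omega
    · exact subset_wShift_Gs hne𝓕 hind Gs hGs x.2.2.2 _

/-- multiplication by `(1,0,G*)` on the left increments `i`. -/
lemma mul_iinc (x : BF 𝓕) :
    BFmul hcl (1, 0, Gs) x = (x.1 + 1, x.2.1, x.2.2) := by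
  rw [BFmul_of_le hcl (by simp : ((1:ℕ), 0, Gs).2.1 ≤ x.1)]
  apply BF.ext <;> simp
  · omega
  · exact subset_wShift_Gs hne𝓕 hind Gs hGs x.2.2.2 _


/-- the key constant-product pairs. -/
lemma mul_pair (F₀ : {F : Set ℕ // F ∈ 𝓕}) (iC jj iR j₀ : ℕ) :
    BFmul hcl (iC, jj, F₀) (jj + iR, j₀, F₀) = (iC + iR, j₀, F₀) := by
  rw [BFmul_of_le hcl (by simp : ((iC, jj, F₀) : BF 𝓕).2.1 ≤ ((jj + iR, j₀, F₀) : BF 𝓕).1)]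
  have harith : jj + iR - jj = iR := by omega
  apply BF.ext
  · simp [harith]
  · simp
  · simp only [harith]
    exact wShift_inter_self hne𝓕 hind F₀.2 iR

lemma eps_mul {m : ℕ} (hm : sInf Gs.1 ≤ m) {x : BF 𝓕} (h : m ≤ x.1) :
    BFmul hcl (m, m, Gs) x = x := by
  rw [BFmul_of_le hcl (by simpa : ((m, m, Gs) : BF 𝓕).2.1 ≤ x.1)]
  apply BF.ext
  · simp; omega
  · simp
  · exact Set.inter_eq_right.mpr (subset_wShift_Gs hne𝓕 hind Gs hGs x.2.2.2 _)

lemma eps_mul_ne {m : ℕ} {x : BF 𝓕} (h : x.1 < m) : BFmul hcl (m, m, Gs) x ≠ x := by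
  rw [BFmul_of_gt hcl (by simpa : x.1 < ((m, m, Gs) : BF 𝓕).2.1)]
  intro heq
  have := congrArg Prod.fst heq
  simp at this
  omega

lemma mul_eps {m : ℕ} {x : BF 𝓕} (h : m ≤ x.2.1) : BFmul hcl x (m, m, Gs) = x := by
  rcases eq_or_lt_of_le h with h' | h'
  · rw [BFmul_of_le hcl (by simpa using h'.ge : x.2.1 ≤ ((m, m, Gs) : BF 𝓕).1)]
    apply BF.ext
    · simp; omega
    · simp [h']
    · have : m - x.2.1 = 0 := by omega
      simp only [this, wShift_zero]
      exact Set.inter_eq_left.mpr (subset_Gs hne𝓕 hind Gs hGs x.2.2.2)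
  · rw [BFmul_of_gt hcl (by simpa : ((m, m, Gs) : BF 𝓕).1 < x.2.1)]
    apply BF.ext
    · simp
    · simp; omega
    · exact Set.inter_eq_left.mpr (subset_wShift_Gs hne𝓕 hind Gs hGs x.2.2.2 _)

lemma mul_eps_ne {m : ℕ} {x : BF 𝓕} (h : x.2.1 < m) : BFmul hcl x (m, m, Gs) ≠ x := by
  rw [BFmul_of_le hcl (by simpa using h.le : x.2.1 ≤ ((m, m, Gs) : BF 𝓕).1)]
  intro heq
  have := congrArg (fun t : BF 𝓕 => t.2.1) heq
  simp at this
  omega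

lemma mul_T {c d : ℕ} (F : {F : Set ℕ // F ∈ 𝓕}) :
    BFmul hcl (0, c, Gs) (BFmul hcl (c, d, F) (d, 0, Gs)) = (0, 0, F) := by
  have h1 : BFmul hcl ((c, d, F) : BF 𝓕) (d, 0, Gs) = (c, 0, F) := by
    rw [BFmul_of_le hcl (by simp : ((c, d, F) : BF 𝓕).2.1 ≤ ((d, 0, Gs) : BF 𝓕).1)]
    apply BF.ext
    · simp
    · simp
    · simp only [Nat.sub_self, wShift_zero]
      exact Set.inter_eq_left.mpr (subset_Gs hne𝓕 hind Gs hGs F.2)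
  rw [h1]
  rw [BFmul_of_le hcl (by simp : ((0, c, Gs) : BF 𝓕).2.1 ≤ ((c, 0, F) : BF 𝓕).1)]
  apply BF.ext
  · simp
  · simp
  · simp only [Nat.sub_self, wShift_zero]
    exact Set.inter_eq_right.mpr (subset_Gs hne𝓕 hind Gs hGs F.2)

lemma mul_w0 {Fb F : {F : Set ℕ // F ∈ 𝓕}} (h : sInf Fb.1 ≤ sInf F.1) :
    BFmul hcl ((0, 0, Fb) : BF 𝓕) (0, 0, F) = (0, 0, F) := by
  rw [BFmul_of_le hcl (by simp : ((0, 0, Fb) : BF 𝓕).2.1 ≤ ((0, 0, F) : BF 𝓕).1)]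
  apply BF.ext
  · simp
  · simp
  · simp only [Nat.sub_self, wShift_zero]
    exact Set.inter_eq_right.mpr (subset_of_sInf_le hne𝓕 hind F.2 Fb.2 h)

lemma mul_w0_ne {Fb : {F : Set ℕ // F ∈ 𝓕}} (z : BF 𝓕)
    (h : sInf z.2.2.1 + z.1 < sInf Fb.1) :
    BFmul hcl ((0, 0, Fb) : BF 𝓕) z ≠ z := by
  rw [BFmul_of_le hcl (by simp : ((0, 0, Fb) : BF 𝓕).2.1 ≤ z.1)]
  intro heq
  have h3 := congrArg (fun t : BF 𝓕 => (t.2.2 : Set ℕ)) heq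
  simp only at h3
  have hmem : sInf z.2.2.1 ∈ z.2.2.1 := Nat.sInf_mem (hne𝓕 _ z.2.2.2)
  have hmem2 : sInf z.2.2.1 ∈ wShift (z.1 - 0) Fb.1 ∩ z.2.2.1 := by
    rw [h3]; exact hmem
  have h4 : sInf z.2.2.1 + (z.1 - 0) ∈ Fb.1 := hmem2.1
  have h5 : sInf Fb.1 ≤ sInf z.2.2.1 + (z.1 - 0) := Nat.sInf_le h4
  omega

end Mul


section Topo

lemma neBot_of_finset_biUnion {S : Type*} [TopologicalSpace S] {ι : Type*} [DecidableEq ι]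
    (t : Finset ι) (f : ι → Set S) (x : S)
    (h : (nhdsWithin x (⋃ i ∈ t, f i)).NeBot) : ∃ i ∈ t, (nhdsWithin x (f i)).NeBot := by
  classical
  revert h
  induction t using Finset.induction_on with
  | empty =>
    intro h
    exfalso
    simp only [Finset.notMem_empty, Set.iUnion_of_empty, Set.iUnion_empty,
      nhdsWithin_empty] at h
    exact h.ne rfl
  | insert a s ha ih =>
    intro h
    rw [Finset.set_biUnion_insert, nhdsWithin_union] at h
    rcases Filter.sup_neBot.mp h with h1 | h2
    · exact ⟨_, Finset.mem_insert_self _ _, h1⟩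
    · obtain ⟨i, hi, hni⟩ := ih h2
      exact ⟨i, Finset.mem_insert_of_mem hi, hni⟩

end Topo

section Isolated

variable {S : Type*} [Semigroup S] [TopologicalSpace S] [T2Space S] [ContinuousMul S]
variable (hcl : OmegaClosed 𝓕) (hne𝓕 : ∀ F ∈ 𝓕, F.Nonempty) (hind : ∀ F ∈ 𝓕, InductiveSet F)
variable (φ : BF 𝓕 → S) (hφmul : ∀ x y : BF 𝓕, φ (BFmul hcl x y) = φ x * φ y)
  (hinj : Function.Injective φ)
include hne𝓕 hind hφmul hinj

/-- Bertman–West style discreteness: every point of the image of `φ` is isolated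
in the image. -/
lemma isolated (b : BF 𝓕) : ∃ W, IsOpen W ∧ W ∩ Set.range φ = {φ b} := by
  by_contra hno
  -- φ b lies in the closure of the rest of the range
  have hclmem : φ b ∈ closure (Set.range φ \ {φ b}) := by
    by_contra h2
    rw [mem_closure_iff] at h2
    push_neg at h2
    obtain ⟨o, ho, hbo, hoe⟩ := h2
    apply hno
    refine ⟨o, ho, ?_⟩
    apply Set.Subset.antisymm
    · rintro y ⟨hy1, hy2⟩
      by_contra hy3
      have : (o ∩ (Set.range φ \ {φ b})).Nonempty := ⟨y, hy1, hy2, hy3⟩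
      rw [hoe] at this
      exact Set.not_nonempty_empty this
    · rintro y rfl
      exact ⟨hbo, Set.mem_range_self b⟩
  -- the minimal element of the family
  have hMne : (sInf '' 𝓕).Nonempty := ⟨sInf b.2.2.1, Set.mem_image_of_mem _ b.2.2.2⟩
  obtain ⟨Gset, hGsetmem, hGseteq⟩ := Nat.sInf_mem hMne
  set Gs : {F : Set ℕ // F ∈ 𝓕} := ⟨Gset, hGsetmem⟩ with hGsdef
  have hGs : ∀ F ∈ 𝓕, sInf Gs.1 ≤ sInf F := by
    intro F hF
    rw [hGsdef]
    simp only [hGseteq]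
    exact Nat.sInf_le (Set.mem_image_of_mem _ hF)
  set m : ℕ := max (max (b.1 + 1) (b.2.1 + 1)) (sInf Gs.1) with hmdef
  have hmGs : sInf Gs.1 ≤ m := le_max_right _ _
  have hmb1 : b.1 < m := by omega
  have hmb2 : b.2.1 < m := by omega
  -- the classes
  set P1 : Set S := φ '' {x : BF 𝓕 | m ≤ x.1} with hP1def
  set P2 : Set S := φ '' {x : BF 𝓕 | m ≤ x.2.1} with hP2def
  set P3 : (ℕ × ℕ) → Set S :=
    fun q => φ '' {x : BF 𝓕 | x.1 = q.1 ∧ x.2.1 = q.2 ∧ x ≠ b} with hP3def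
  have hcover : Set.range φ \ {φ b} ⊆
      P1 ∪ (P2 ∪ ⋃ q ∈ (Finset.range m ×ˢ Finset.range m), P3 q) := by
    rintro y ⟨⟨x, rfl⟩, hy2⟩
    have hxb : x ≠ b := fun h => hy2 (by rw [h]; rfl)
    rcases le_or_gt m x.1 with h1 | h1
    · exact Or.inl ⟨x, h1, rfl⟩
    rcases le_or_gt m x.2.1 with h2 | h2
    · exact Or.inr (Or.inl ⟨x, h2, rfl⟩)
    · refine Or.inr (Or.inr ?_)
      have hqmem : ((x.1, x.2.1) : ℕ × ℕ) ∈ (Finset.range m ×ˢ Finset.range m) := by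
        simp only [Finset.mem_product, Finset.mem_range]
        exact ⟨h1, h2⟩
      exact Set.mem_iUnion₂.mpr ⟨(x.1, x.2.1), hqmem, ⟨x, ⟨rfl, rfl, hxb⟩, rfl⟩⟩
  have hnb : (nhdsWithin (φ b)
      (P1 ∪ (P2 ∪ ⋃ q ∈ (Finset.range m ×ˢ Finset.range m), P3 q))).NeBot :=
    (mem_closure_iff_nhdsWithin_neBot.mp hclmem).mono (nhdsWithin_mono _ hcover)
  rw [nhdsWithin_union] at hnb
  rcases Filter.sup_neBot.mp hnb with hn1 | hn23
  -- Case P1 : i ≥ m, use left multiplication by the idempotent (m,m,G*)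
  · haveI := hn1
    have T1 : Filter.Tendsto (fun y : S => y) (nhdsWithin (φ b) P1) (nhds (φ b)) :=
      Filter.tendsto_id.mono_left nhdsWithin_le_nhds
    have T2 : Filter.Tendsto (fun y : S => φ (m, m, Gs) * y) (nhdsWithin (φ b) P1)
        (nhds (φ (m, m, Gs) * φ b)) :=
      ((continuous_mul_left (φ (m, m, Gs))).tendsto (φ b)).comp T1
    have heq : ∀ᶠ y in nhdsWithin (φ b) P1, φ (m, m, Gs) * y = y := by
      apply Filter.eventually_of_mem self_mem_nhdsWithin
      rintro y ⟨x, hx, rfl⟩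
      rw [← hφmul, eps_mul hcl hne𝓕 hind Gs hGs hmGs hx]
    have T3 : Filter.Tendsto (fun y : S => y) (nhdsWithin (φ b) P1)
        (nhds (φ (m, m, Gs) * φ b)) := T2.congr' (by filter_upwards [heq] with y h using h)
    have : φ (m, m, Gs) * φ b = φ b := tendsto_nhds_unique T3 T1
    rw [← hφmul] at this
    exact eps_mul_ne hcl hne𝓕 hind Gs hGs hmb1 (hinj this)
  rw [nhdsWithin_union] at hn23
  rcases Filter.sup_neBot.mp hn23 with hn2 | hn3
  -- Case P2 : j ≥ m, use right multiplication
  · haveI := hn2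
    have T1 : Filter.Tendsto (fun y : S => y) (nhdsWithin (φ b) P2) (nhds (φ b)) :=
      Filter.tendsto_id.mono_left nhdsWithin_le_nhds
    have T2 : Filter.Tendsto (fun y : S => y * φ (m, m, Gs)) (nhdsWithin (φ b) P2)
        (nhds (φ b * φ (m, m, Gs))) :=
      ((continuous_mul_right (φ (m, m, Gs))).tendsto (φ b)).comp T1
    have heq : ∀ᶠ y in nhdsWithin (φ b) P2, y * φ (m, m, Gs) = y := by
      apply Filter.eventually_of_mem self_mem_nhdsWithin
      rintro y ⟨x, hx, rfl⟩
      rw [← hφmul, mul_eps hcl hne𝓕 hind Gs hGs hx]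
    have T3 : Filter.Tendsto (fun y : S => y) (nhdsWithin (φ b) P2)
        (nhds (φ b * φ (m, m, Gs))) := T2.congr' (by filter_upwards [heq] with y h using h)
    have : φ b * φ (m, m, Gs) = φ b := tendsto_nhds_unique T3 T1
    rw [← hφmul] at this
    exact mul_eps_ne hcl hne𝓕 hind Gs hGs hmb2 (hinj this)
  -- Case P3 : a fixed fiber (c,d)
  · obtain ⟨⟨c, d⟩, hqmem, hq⟩ := neBot_of_finset_biUnion _ _ _ hn3
    haveI := hq
    set cls : Set (BF 𝓕) := {x : BF 𝓕 | x.1 = c ∧ x.2.1 = d ∧ x ≠ b} with hclsdef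
    by_cases hfin : (P3 (c, d)).Finite
    · have hclosed : IsClosed (P3 (c, d)) := hfin.isClosed
      have : φ b ∈ P3 (c, d) := by
        have := mem_closure_iff_nhdsWithin_neBot.mpr hq
        rwa [hclosed.closure_eq] at this
      obtain ⟨x, hx, hxeq⟩ := this
      exact hx.2.2 (hinj hxeq)
    · -- the class is infinite, so 𝓕 is infinite
      have hclsinf : cls.Infinite := Set.Infinite.of_image φ hfin
      have h𝓕inf : 𝓕.Infinite := by
        apply Set.Infinite.mono (s := (fun x : BF 𝓕 => x.2.2.1) '' cls)
        · rintro G ⟨x, hx, rfl⟩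
          exact x.2.2.2
        · apply Set.Infinite.image ?_ hclsinf
          intro x hx x' hx' hxx
          exact BF.ext (hx.1.trans hx'.1.symm) (hx.2.1.trans hx'.2.1.symm) hxx
      set z₁ : BF 𝓕 := BFmul hcl (0, c, Gs) (BFmul hcl b (d, 0, Gs)) with hz₁def
      obtain ⟨Fbset, hFbmem, hFb⟩ := exists_sInf_gt hne𝓕 hind h𝓕inf (sInf z₁.2.2.1 + z₁.1)
      set Fb : {F : Set ℕ // F ∈ 𝓕} := ⟨Fbset, hFbmem⟩ with hFbdef
      set T : S → S := fun s => φ (0, c, Gs) * (s * φ (d, 0, Gs)) with hTdef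
      have hTcont : Continuous T :=
        (continuous_mul_left _).comp (continuous_mul_right _)
      have hTx : ∀ x ∈ cls, T (φ x) = φ ((0, 0, x.2.2) : BF 𝓕) := by
        intro x hx
        have hxsplit : x = ((c, d, x.2.2) : BF 𝓕) := BF.ext hx.1 hx.2.1 rfl
        rw [hTdef]
        simp only
        rw [← hφmul, ← hφmul]
        rw [hxsplit]
        rw [mul_T hcl hne𝓕 hind Gs hGs]
      have hTb : T (φ b) = φ z₁ := by
        rw [hTdef]; simp only [← hφmul, hz₁def]
      set Bad : Set S :=
        φ '' {x : BF 𝓕 | x.1 = c ∧ x.2.1 = d ∧ sInf x.2.2.1 < sInf Fb.1} with hBaddef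
      have hBadfin : Bad.Finite := by
        apply Set.Finite.image
        apply Set.Finite.of_finite_image (f := fun x : BF 𝓕 => sInf x.2.2.1)
        · apply (Set.finite_Iio (sInf Fb.1)).subset
          rintro n ⟨x, hx, rfl⟩
          exact hx.2.2
        · intro x hx x' hx' hxx
          exact BF.ext (hx.1.trans hx'.1.symm) (hx.2.1.trans hx'.2.1.symm)
            (eq_of_sInf_eq hne𝓕 hind x.2.2.2 x'.2.2.2 hxx)
      have hbnotin : φ b ∉ Bad \ {φ b} := fun h => h.2 rfl
      have hevBad : ∀ᶠ y in nhdsWithin (φ b) (P3 (c, d)), y ∉ Bad \ {φ b} := by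
        apply Filter.eventually_of_mem (nhdsWithin_le_nhds ?_) (fun y hy => hy)
        exact ((hBadfin.diff (t := {φ b})).isClosed.isOpen_compl).mem_nhds hbnotin
      have T1 : Filter.Tendsto (fun y : S => y) (nhdsWithin (φ b) (P3 (c, d))) (nhds (φ b)) :=
        Filter.tendsto_id.mono_left nhdsWithin_le_nhds
      have T2 : Filter.Tendsto T (nhdsWithin (φ b) (P3 (c, d))) (nhds (φ z₁)) := by
        rw [← hTb]
        exact (hTcont.tendsto (φ b)).comp T1
      have T3 : Filter.Tendsto (fun y => φ ((0, 0, Fb) : BF 𝓕) * T y)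
          (nhdsWithin (φ b) (P3 (c, d))) (nhds (φ (0, 0, Fb) * φ z₁)) :=
        ((continuous_mul_left _).tendsto (φ z₁)).comp T2
      have heqev : ∀ᶠ y in nhdsWithin (φ b) (P3 (c, d)),
          φ ((0, 0, Fb) : BF 𝓕) * T y = T y := by
        filter_upwards [hevBad, self_mem_nhdsWithin] with y hy1 hy2
        obtain ⟨x, hx, rfl⟩ := hy2
        have hyne : φ x ≠ φ b := fun h => hx.2.2 (hinj h)
        have hynotBad : φ x ∉ Bad := fun h => hy1 ⟨h, hyne⟩
        have hxlarge : sInf Fb.1 ≤ sInf x.2.2.1 := by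
          by_contra hc
          exact hynotBad ⟨x, ⟨hx.1, hx.2.1, by omega⟩, rfl⟩
        rw [hTx x hx, ← hφmul, mul_w0 hcl hne𝓕 hind Gs hGs hxlarge]
      have T4 : Filter.Tendsto T (nhdsWithin (φ b) (P3 (c, d)))
          (nhds (φ (0, 0, Fb) * φ z₁)) :=
        T3.congr' (by filter_upwards [heqev] with y h using h)
      have hfinal : φ ((0, 0, Fb) : BF 𝓕) * φ z₁ = φ z₁ := tendsto_nhds_unique T4 T2
      rw [← hφmul] at hfinal
      exact mul_w0_ne hcl hne𝓕 hind Gs hGs z₁ hFb (hinj hfinal)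

end Isolated




section Comb

variable (hcl : OmegaClosed 𝓕) (hne𝓕 : ∀ F ∈ 𝓕, F.Nonempty) (hind : ∀ F ∈ 𝓕, InductiveSet F)
variable (Gs : {F : Set ℕ // F ∈ 𝓕}) (hGs : ∀ F ∈ 𝓕, sInf Gs.1 ≤ sInf F)
include hne𝓕 hind hGs

/-- increment chains: if the `i`-increment is cofinitely stable on `D`,
there is a full row inside `D` provided suitable starting points exist. -/
lemma comb_aux (D : Set (BF 𝓕)) (hD : D.Infinite)
    (hE : (D \ {x | BFmul hcl ((1, 0, Gs) : BF 𝓕) x ∈ D}).Finite) :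
    ∃ j₀ F₀, {i : ℕ | ((i, j₀, F₀) : BF 𝓕) ∈ D}.Infinite := by
  classical
  by_contra hall
  push_neg at hall
  have hall' : ∀ (j₀ : ℕ) (F₀ : {F : Set ℕ // F ∈ 𝓕}),
      {i : ℕ | ((i, j₀, F₀) : BF 𝓕) ∈ D}.Finite :=
    fun j₀ F₀ => hall j₀ F₀
  set p : BF 𝓕 → ℕ × {F : Set ℕ // F ∈ 𝓕} := fun x => (x.2.1, x.2.2) with hpdef
  set XE := D \ {x | BFmul hcl ((1, 0, Gs) : BF 𝓕) x ∈ D} with hXEdef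
  by_cases hpD : (p '' D).Finite
  · -- finitely many (j,F)-parts: D would be finite
    apply hD
    have hsub : D ⊆ ⋃ q ∈ p '' D, (fun i : ℕ => ((i, q.1, q.2) : BF 𝓕)) ''
        {i : ℕ | ((i, q.1, q.2) : BF 𝓕) ∈ D} := by
      intro x hx
      apply Set.mem_iUnion₂.mpr
      exact ⟨p x, Set.mem_image_of_mem _ hx, ⟨x.1, hx, rfl⟩⟩
    exact (hpD.biUnion (fun q _ => (hall' q.1 q.2).image _)).subset hsub
  · -- infinitely many (j,F)-parts
    have hXEfin : (p '' XE).Finite := hE.image p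
    have hex : ∃ x ∈ D, p x ∉ p '' XE := by
      by_contra hc
      push_neg at hc
      exact hpD (hXEfin.subset (by rintro q ⟨x, hx, rfl⟩; exact hc x hx))
    obtain ⟨x, hxD, hxE⟩ := hex
    have hchain : ∀ k : ℕ, ((x.1 + k, x.2.1, x.2.2) : BF 𝓕) ∈ D := by
      intro k
      induction k with
      | zero => simpa using hxD
      | succ n ih =>
        have hnot : ((x.1 + n, x.2.1, x.2.2) : BF 𝓕) ∉ XE := by
          intro hmem
          exact hxE ⟨(x.1 + n, x.2.1, x.2.2), hmem, rfl⟩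
        have : ((x.1 + n, x.2.1, x.2.2) : BF 𝓕) ∈
            {y : BF 𝓕 | BFmul hcl ((1, 0, Gs) : BF 𝓕) y ∈ D} := by
          by_contra hcon
          exact hnot ⟨ih, hcon⟩
        have h2 : BFmul hcl ((1, 0, Gs) : BF 𝓕) ((x.1 + n, x.2.1, x.2.2) : BF 𝓕) ∈ D := this
        rwa [mul_iinc hcl hne𝓕 hind Gs hGs] at h2
    refine absurd ?_ (Set.not_infinite.mpr (hall x.2.1 x.2.2))
    apply Set.infinite_of_injective_forall_mem (f := fun k : ℕ => x.1 + k)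
    · intro a b hab
      simp only [add_right_inj] at hab
      exact hab
    · intro k; exact hchain k

/-- The combinatorial heart: an infinite subset of `B_ω^𝓕` cofinitely stable
under the increments contains two injective sequences with constant product. -/
lemma comb (D : Set (BF 𝓕)) (hD : D.Infinite)
    (hA : (D \ {x | BFmul hcl x ((0, 1, Gs) : BF 𝓕) ∈ D}).Finite)
    (hE : (D \ {x | BFmul hcl ((1, 0, Gs) : BF 𝓕) x ∈ D}).Finite) :
    ∃ (c : BF 𝓕) (a b : ℕ → BF 𝓕), Function.Injective a ∧ Function.Injective b ∧
      (∀ t, a t ∈ D) ∧ (∀ t, b t ∈ D) ∧ ∀ t, BFmul hcl (a t) (b t) = c := by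
  classical
  obtain ⟨j₀, F₀, hR⟩ := comb_aux hcl hne𝓕 hind Gs hGs D hD hE
  set R := {i : ℕ | ((i, j₀, F₀) : BF 𝓕) ∈ D} with hRdef
  set XE := D \ {x | BFmul hcl ((1, 0, Gs) : BF 𝓕) x ∈ D} with hXEdef
  set XA := D \ {x | BFmul hcl x ((0, 1, Gs) : BF 𝓕) ∈ D} with hXAdef
  -- full row from a high starting point
  obtain ⟨M, hM⟩ := ((hE.image (fun e : BF 𝓕 => e.1)).bddAbove)
  obtain ⟨iR, hiRmem, hiR⟩ := hR.exists_gt M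
  have hRow : ∀ k : ℕ, ((iR + k, j₀, F₀) : BF 𝓕) ∈ D := by
    intro k
    induction k with
    | zero => simpa using (show ((iR, j₀, F₀) : BF 𝓕) ∈ D from hiRmem)
    | succ n ih =>
      have hnot : ((iR + n, j₀, F₀) : BF 𝓕) ∉ XE := by
        intro hmem
        have : iR + n ≤ M := hM ⟨(iR + n, j₀, F₀), hmem, rfl⟩
        omega
      have hstep : BFmul hcl ((1, 0, Gs) : BF 𝓕) ((iR + n, j₀, F₀) : BF 𝓕) ∈ D := by
        by_contra hcon
        exact hnot ⟨ih, hcon⟩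
      rwa [mul_iinc hcl hne𝓕 hind Gs hGs] at hstep
  -- a full column from a hit-free starting point
  have hcolfree : ∃ i ∈ R, ∀ k : ℕ, ((i, j₀ + k, F₀) : BF 𝓕) ∉ XA := by
    have hsub : {i ∈ R | ∃ k : ℕ, ((i, j₀ + k, F₀) : BF 𝓕) ∈ XA} ⊆
        (fun e : BF 𝓕 => e.1) '' XA := by
      rintro i ⟨hiR', k, hk⟩
      exact ⟨(i, j₀ + k, F₀), hk, rfl⟩
    have hfin : {i ∈ R | ∃ k : ℕ, ((i, j₀ + k, F₀) : BF 𝓕) ∈ XA}.Finite :=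
      ((hA.image (fun e : BF 𝓕 => e.1)).subset hsub)
    obtain ⟨i, hi⟩ := (hR.diff hfin).nonempty
    refine ⟨i, hi.1, fun k hk => hi.2 ⟨hi.1, k, hk⟩⟩
  obtain ⟨iC, hiCmem, hiC⟩ := hcolfree
  have hCol : ∀ k : ℕ, ((iC, j₀ + k, F₀) : BF 𝓕) ∈ D := by
    intro k
    induction k with
    | zero => simpa using (show ((iC, j₀, F₀) : BF 𝓕) ∈ D from hiCmem)
    | succ n ih =>
      have hstep : BFmul hcl ((iC, j₀ + n, F₀) : BF 𝓕) ((0, 1, Gs) : BF 𝓕) ∈ D := by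
        by_contra hcon
        exact hiC n ⟨ih, hcon⟩
      rwa [mul_jinc hcl hne𝓕 hind Gs hGs] at hstep
  -- the two sequences
  refine ⟨((iC + iR, j₀, F₀) : BF 𝓕),
    fun t => ((iC, j₀ + t, F₀) : BF 𝓕),
    fun t => (((j₀ + t) + iR, j₀, F₀) : BF 𝓕), ?_, ?_, ?_, ?_, ?_⟩
  · intro a b hab
    have := congrArg (fun z : BF 𝓕 => z.2.1) hab
    simpa using this
  · intro a b hab
    have := congrArg (fun z : BF 𝓕 => z.1) hab
    simp only at this
    omega
  · exact fun t => hCol t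
  · intro t
    have := hRow (j₀ + t)
    have harith : iR + (j₀ + t) = (j₀ + t) + iR := by omega
    rwa [harith] at this
  · intro t
    exact mul_pair hcl hne𝓕 hind Gs hGs F₀ iC (j₀ + t) iR j₀

end Comb

end Aux

/-- Theorem 3.15: let `S` be a Hausdorff locally compact topological semigroup
(jointly continuous multiplication) containing a nonempty compact two-sided ideal
`I` such that `S \ I` is a subsemigroup isomorphic to `B_ω^𝓕`, for an ω-closed
family `𝓕` of nonempty inductive subsets of `ω`. Then `I` is open. -/
theorem statement16 (𝓕 : Set (Set ℕ)) (hcl : OmegaClosed 𝓕)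
    (hne𝓕 : ∀ F ∈ 𝓕, F.Nonempty) (hind : ∀ F ∈ 𝓕, InductiveSet F)
    {S : Type*} [Semigroup S] [TopologicalSpace S] [T2Space S] [LocallyCompactSpace S]
    [ContinuousMul S]
    (I : Set S) (hIne : I.Nonempty) (hIcomp : IsCompact I)
    (hIideal : ∀ x y : S, (x ∈ I ∨ y ∈ I) → x * y ∈ I)
    (φ : BF 𝓕 → S) (hφmul : ∀ x y : BF 𝓕, φ (BFmul hcl x y) = φ x * φ y)
    (hinj : Function.Injective φ) (hrange : Set.range φ = Iᶜ) :
    IsOpen I := by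
  classical
  by_cases hBF : Nonempty (BF 𝓕)
  swap
  · -- degenerate case : the range is empty and I is everything
    haveI : IsEmpty (BF 𝓕) := not_nonempty_iff.mp hBF
    have h1 : (Iᶜ : Set S) = ∅ := by rw [← hrange]; exact Set.range_eq_empty φ
    have h2 : I = Set.univ := by
      rw [← compl_compl I, h1, Set.compl_empty]
    rw [h2]; exact isOpen_univ
  obtain ⟨b₀⟩ := hBF
  -- the minimal member of the family
  have hMne : (sInf '' 𝓕).Nonempty := ⟨sInf b₀.2.2.1, Set.mem_image_of_mem _ b₀.2.2.2⟩
  obtain ⟨Gset, hGsetmem, hGseteq⟩ := Nat.sInf_mem hMne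
  set Gs : {F : Set ℕ // F ∈ 𝓕} := ⟨Gset, hGsetmem⟩ with hGsdef
  have hGs : ∀ F ∈ 𝓕, sInf Gs.1 ≤ sInf F := by
    intro F hF
    rw [hGsdef]
    simp only [hGseteq]
    exact Nat.sInf_le (Set.mem_image_of_mem _ hF)
  set C : Set S := Set.range φ with hCdef
  have hCcompl : C = Iᶜ := hrange
  have hisol : ∀ s ∈ C, ∃ W, IsOpen W ∧ W ∩ C = {s} := by
    rintro s ⟨x, rfl⟩
    exact Aux.isolated hcl hne𝓕 hind φ hφmul hinj x
  by_contra hIop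
  -- a point of I in the closure of C
  obtain ⟨x₀, hx₀cl, hx₀C⟩ : ∃ x₀, x₀ ∈ closure C ∧ x₀ ∉ C := by
    by_contra hc
    push_neg at hc
    have hCclosed : IsClosed C := closure_subset_iff_isClosed.mp hc
    apply hIop
    have : I = Cᶜ := by rw [hCcompl, compl_compl]
    rw [this]
    exact hCclosed.isOpen_compl
  have hx₀I : x₀ ∈ I := by
    by_contra h
    exact hx₀C (by rw [hCcompl]; exact h)
  -- a compact neighbourhood of I
  obtain ⟨K, hKcomp, hIintK, -⟩ :=
    exists_compact_between hIcomp isOpen_univ (Set.subset_univ I)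
  set U : Set S := interior K with hUdef
  have hUopen : IsOpen U := isOpen_interior
  have hIU : I ⊆ U := hIintK
  have hUK : U ⊆ K := interior_subset
  set DS : Set S := U ∩ C with hDSdef
  -- (F2) : every open neighbourhood of I cofinitely contains U ∩ C
  have hF2 : ∀ V : Set S, IsOpen V → I ⊆ V → (DS \ V).Finite := by
    intro V hVopen hIV
    have hKV : IsCompact (K \ V) := hKcomp.diff hVopen
    have hKVC : K \ V ⊆ C := by
      intro y hy
      rw [hCcompl]
      exact fun hyI => hy.2 (hIV hyI)
    have hWex : ∀ s ∈ K \ V, ∃ W, IsOpen W ∧ W ∩ C = {s} :=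
      fun s hs => hisol s (hKVC hs)
    choose! W hWopen hWint using hWex
    have hcover : K \ V ⊆ ⋃ s ∈ K \ V, W s := by
      intro s hs
      apply Set.mem_iUnion₂.mpr
      refine ⟨s, hs, ?_⟩
      have : s ∈ W s ∩ C := by rw [hWint s hs]; rfl
      exact this.1
    obtain ⟨b', hb'sub, hb'fin, hb'cover⟩ :=
      hKV.elim_finite_subcover_image (fun s hs => hWopen s hs) hcover
    have hKVfin : (K \ V).Finite := by
      apply hb'fin.subset
      intro y hy
      obtain ⟨s, hs, hys⟩ := Set.mem_iUnion₂.mp (hb'cover hy)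
      have hyWC : y ∈ W s ∩ C := ⟨hys, hKVC hy⟩
      rw [hWint s (hb'sub hs), Set.mem_singleton_iff] at hyWC
      rwa [hyWC]
    exact hKVfin.subset (fun y hy => ⟨hUK hy.1.1, hy.2⟩)
  -- U ∩ C is infinite
  have hDSinf : DS.Infinite := by
    intro hfin
    have hWopen : IsOpen (U ∩ DSᶜ) := hUopen.inter hfin.isClosed.isOpen_compl
    have hx₀W : x₀ ∈ U ∩ DSᶜ := ⟨hIU hx₀I, fun h => hx₀C h.2⟩
    obtain ⟨y, hy1, hy2⟩ := mem_closure_iff.mp hx₀cl _ hWopen hx₀W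
    exact hy1.2 ⟨hy1.1, hy2⟩
  set D : Set (BF 𝓕) := φ ⁻¹' DS with hDdef
  have hDinf : D.Infinite := hDSinf.preimage (fun y hy => hy.2)
  -- cofinite stability of D under continuous ideal-preserving translations
  have hstab : ∀ (g : S → S) (g2 : BF 𝓕 → BF 𝓕), Continuous g → (∀ y ∈ I, g y ∈ I) →
      (∀ x : BF 𝓕, g (φ x) = φ (g2 x)) → (D \ {x | g2 x ∈ D}).Finite := by
    intro g g2 hgc hgI hgφ
    have hVopen : IsOpen (U ∩ g ⁻¹' U) := hUopen.inter (hUopen.preimage hgc)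
    have hIV : I ⊆ U ∩ g ⁻¹' U := fun y hy => ⟨hIU hy, hIU (hgI y hy)⟩
    have hfin := hF2 _ hVopen hIV
    have hsub : (D \ {x | g2 x ∈ D}) ⊆ φ ⁻¹' (DS \ (U ∩ g ⁻¹' U)) := by
      rintro x ⟨hx1, hx2⟩
      refine ⟨hx1, fun hxV => hx2 ?_⟩
      show φ (g2 x) ∈ DS
      refine ⟨?_, Set.mem_range_self _⟩
      rw [← hgφ x]
      exact hxV.2
    exact ((Set.Finite.preimage hinj.injOn hfin).subset hsub)
  have hA : (D \ {x | BFmul hcl x ((0, 1, Gs) : BF 𝓕) ∈ D}).Finite :=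
    hstab (fun s => s * φ ((0, 1, Gs) : BF 𝓕)) (fun x => BFmul hcl x ((0, 1, Gs) : BF 𝓕))
      (continuous_mul_right _) (fun y hy => hIideal y _ (Or.inl hy))
      (fun x => (hφmul x _).symm)
  have hE : (D \ {x | BFmul hcl ((1, 0, Gs) : BF 𝓕) x ∈ D}).Finite :=
    hstab (fun s => φ ((1, 0, Gs) : BF 𝓕) * s) (fun x => BFmul hcl ((1, 0, Gs) : BF 𝓕) x)
      (continuous_mul_left _) (fun y hy => hIideal _ y (Or.inr hy))
      (fun x => (hφmul _ x).symm)
  -- the combinatorial construction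
  obtain ⟨cst, a, b, hainj, hbinj, haD, hbD, hab⟩ :=
    Aux.comb hcl hne𝓕 hind Gs hGs D hDinf hA hE
  -- cluster points of the two sequences
  set ψ : ℕ → S × S := fun t => (φ (a t), φ (b t)) with hψdef
  have hψK : ∀ t, ψ t ∈ K ×ˢ K :=
    fun t => ⟨hUK (haD t).1, hUK (hbD t).1⟩
  have hKK : IsCompact ((K ×ˢ K : Set (S × S))) := hKcomp.prod hKcomp
  haveI : (Filter.map ψ Filter.atTop).NeBot := Filter.map_neBot
  have hle : Filter.map ψ Filter.atTop ≤ Filter.principal (K ×ˢ K) := by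
    rw [Filter.le_principal_iff, Filter.mem_map]
    exact Filter.Eventually.of_forall hψK
  obtain ⟨zw, hzwK, hzw⟩ := hKK.exists_clusterPt hle
  -- a cluster value of a constant sequence is its value
  have hpure : ∀ (y cc : S), ClusterPt y (pure cc) → y = cc := by
    intro y cc h
    have h2 : (nhdsWithin y {cc}).NeBot := by
      rw [nhdsWithin, Filter.principal_singleton]
      exact h
    have h3 := mem_closure_iff_nhdsWithin_neBot.mpr h2
    rwa [closure_singleton, Set.mem_singleton_iff] at h3
  -- any cluster point of an injective sequence from U ∩ C lies in I
  have hmemI : ∀ (z : S) (u : ℕ → BF 𝓕), Function.Injective u → (∀ t, φ (u t) ∈ DS) →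
      ClusterPt z (Filter.map (fun t => φ (u t)) Filter.atTop) → z ∈ I := by
    intro z u huinj huDS hcp
    by_contra hzI
    have hzC : z ∈ C := by rw [hCcompl]; exact hzI
    obtain ⟨W, hWopen, hWC⟩ := hisol z hzC
    have hzW : z ∈ W := by
      have : z ∈ W ∩ C := by rw [hWC]; rfl
      exact this.1
    have hfreq : ∃ᶠ t in Filter.atTop, φ (u t) ∈ W := by
      have hcp' : MapClusterPt z Filter.atTop (fun t => φ (u t)) := hcp
      have h4 : ∀ s ∈ nhds z, ∃ᶠ t in Filter.atTop, φ (u t) ∈ s :=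
        mapClusterPt_iff_frequently.mp hcp'
      exact h4 W (hWopen.mem_nhds hzW)
    obtain ⟨xz, hxz⟩ := hzC
    have heqz : ∀ t, φ (u t) ∈ W → u t = xz := by
      intro t ht
      have : φ (u t) ∈ W ∩ C := ⟨ht, Set.mem_range_self _⟩
      rw [hWC, Set.mem_singleton_iff, ← hxz] at this
      exact hinj this
    obtain ⟨t₁, -, ht₁⟩ := Filter.frequently_atTop.mp hfreq 0
    obtain ⟨t₂, ht₂ge, ht₂⟩ := Filter.frequently_atTop.mp hfreq (t₁ + 1)
    have : t₁ = t₂ := huinj ((heqz t₁ ht₁).trans (heqz t₂ ht₂).symm)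
    omega
  -- project the pair cluster point
  have hza : ClusterPt zw.1 (Filter.map (fun t => φ (a t)) Filter.atTop) := by
    refine hzw.map continuous_fst.continuousAt ?_
    rw [Filter.Tendsto, Filter.map_map]
    exact le_rfl
  have hzb : ClusterPt zw.2 (Filter.map (fun t => φ (b t)) Filter.atTop) := by
    refine hzw.map continuous_snd.continuousAt ?_
    rw [Filter.Tendsto, Filter.map_map]
    exact le_rfl
  have hz1I : zw.1 ∈ I := hmemI zw.1 a hainj (fun t => haD t) hza
  have hz2I : zw.2 ∈ I := hmemI zw.2 b hbinj (fun t => hbD t) hzb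
  -- multiply: the product of the cluster point equals the constant product
  have hzmul : ClusterPt (zw.1 * zw.2) (Filter.map (fun t => φ (a t) * φ (b t)) Filter.atTop) := by
    refine hzw.map (continuous_mul.continuousAt) ?_
    rw [Filter.Tendsto, Filter.map_map]
    exact le_rfl
  have hconst : (fun t => φ (a t) * φ (b t)) = fun _ => φ cst := by
    funext t
    rw [← hφmul, hab t]
  rw [hconst, Filter.map_const] at hzmul
  have hfin : zw.1 * zw.2 = φ cst := hpure _ _ hzmul
  have h5 : φ cst ∈ I := by rw [← hfin]; exact hIideal _ _ (Or.inl hz1I)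
  have h6 : φ cst ∈ Iᶜ := by rw [← hrange]; exact Set.mem_range_self _
  exact h6 h5
end
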